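/- arXiv:1408.0195 — 8 statements merged into one kernel-verified Lean document; each statement's English description precedes it below -/
import Mathlib

section
/- If τ is a Salem number of degree d, then τⁿ is also a Salem number of degree d for every positive integer n. -/
/-- `z : ℂ` is a conjugate of the real algebraic number `τ`:
it is a complex root of the minimal polynomial of `τ` over `ℚ`. -/
def IsConjugateOf (z : ℂ) (τ : ℝ) : Prop :=
  Polynomial.aeval z (minpoly ℚ τ) = 0

/-- A Salem number: a real algebraic integer `τ > 1`, of degree at least 4,
conjugate to `τ⁻¹`, all of whose conjugates other than `τ` and `τ⁻¹`
have modulus 1. -/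
def IsSalem (τ : ℝ) : Prop :=
  1 < τ ∧ IsIntegral ℤ τ ∧ 4 ≤ (minpoly ℚ τ).natDegree ∧
    IsConjugateOf ((τ : ℂ))⁻¹ τ ∧
    ∀ z : ℂ, IsConjugateOf z τ → z ≠ (τ : ℂ) → z ≠ ((τ : ℂ))⁻¹ → ‖z‖ = 1

open Polynomial IntermediateField

/-- Any complex root of `minpoly ℚ τ` of modulus `τ` equals `τ`, for a Salem `τ`. -/
lemma salem_root_eq (τ : ℝ) (hτ : IsSalem τ) (z : ℂ)
    (hz : Polynomial.aeval z (minpoly ℚ τ) = 0) (habs : ‖z‖ = τ) :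
    z = (τ : ℂ) := by
  obtain ⟨h1, _, _, _, hcirc⟩ := hτ
  by_contra hne
  rcases eq_or_ne z ((τ : ℂ))⁻¹ with rfl | hne'
  · rw [norm_inv, Complex.norm_real, Real.norm_eq_abs, abs_of_pos (by linarith)] at habs
    have : τ * τ = 1 := by field_simp at habs; linarith [habs]
    nlinarith
  · have := hcirc z hz hne hne'
    rw [this] at habs; linarith

theorem salem_pow (τ : ℝ) (d : ℕ) (hτ : IsSalem τ) (hd : (minpoly ℚ τ).natDegree = d)
    (n : ℕ) (hn : 1 ≤ n) :
    IsSalem (τ ^ n) ∧ (minpoly ℚ (τ ^ n)).natDegree = d := by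
  obtain ⟨h1, hint, hdeg, hinv, hcirc⟩ := hτ
  have hτ0 : (0:ℝ) < τ := by linarith
  have hτn1 : 1 < τ ^ n := one_lt_pow₀ h1 (by omega)
  have hintQ : IsIntegral ℚ τ := hint.tower_top
  have hintQn : IsIntegral ℚ (τ ^ n) := hintQ.pow n
  set p := minpoly ℚ τ with hp
  set q := minpoly ℚ (τ ^ n) with hq
  -- Step 1: every complex root z of p gives a root z^n of q
  have hstep1 : ∀ z : ℂ, Polynomial.aeval z p = 0 → Polynomial.aeval (z ^ n) q = 0 := by
    intro z hz
    have hdvd : p ∣ q.comp (X ^ n) := by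
      apply minpoly.dvd
      rw [Polynomial.aeval_comp, Polynomial.aeval_X_pow]
      exact minpoly.aeval ℚ (τ ^ n)
    obtain ⟨r, hr⟩ := hdvd
    have := congrArg (Polynomial.aeval z) hr.symm
    rw [map_mul, hz, zero_mul, Polynomial.aeval_comp] at this
    rw [Polynomial.aeval_X_pow] at this
    exact this.symm
  -- Step 2: τ ∈ ℚ⟮τ ^ n⟯
  set F : IntermediateField ℚ ℝ := ℚ⟮τ ^ n⟯ with hF
  have hmemn : (τ ^ n : ℝ) ∈ F := mem_adjoin_simple_self ℚ (τ ^ n)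
  have hintF : IsIntegral F τ := hintQ.tower_top
  have hτmem : τ ∈ F := by
    set g := minpoly F τ with hgdef
    set f : F →+* ℂ := (algebraMap ℝ ℂ).comp (algebraMap F ℝ) with hfdef
    -- every root of g.map f equals (τ : ℂ)
    have hroots : ∀ z ∈ (g.map f).roots, z = (τ : ℂ) := by
      intro z hz
      have hz0 : (g.map f).eval z = 0 := by
        have := (mem_roots (Polynomial.map_ne_zero (minpoly.ne_zero hintF) : g.map f ≠ 0)).1 hz
        exact this
      -- z is a root of p over ℂ
      have hdvd1 : g ∣ p.map (algebraMap ℚ F) := minpoly.dvd_map_of_isScalarTower ℚ F τ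
      have hzp : Polynomial.aeval z p = 0 := by
        obtain ⟨r, hr⟩ := hdvd1
        have : (p.map (algebraMap ℚ F)).map f = (g.map f) * (r.map f) := by
          rw [hr, Polynomial.map_mul]
        have h2 : ((p.map (algebraMap ℚ F)).map f).eval z = 0 := by
          rw [this, eval_mul, hz0, zero_mul]
        rw [Polynomial.map_map] at h2
        have : f.comp (algebraMap ℚ F) = algebraMap ℚ ℂ := Subsingleton.elim _ _
        rw [this] at h2
        rwa [Polynomial.aeval_def, Polynomial.eval₂_eq_eval_map]
      -- z ^ n = τ ^ n
      have hdvd2 : g ∣ (X ^ n - C (⟨τ ^ n, hmemn⟩ : F)) := by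
        apply minpoly.dvd
        simp
      have hzn : z ^ n = ((τ : ℂ)) ^ n := by
        obtain ⟨r, hr⟩ := hdvd2
        have h2 : ((X ^ n - C (⟨τ ^ n, hmemn⟩ : F)).map f).eval z = 0 := by
          rw [hr, Polynomial.map_mul, eval_mul, hz0, zero_mul]
        have hfval : f (⟨τ ^ n, hmemn⟩ : F) = ((τ : ℂ)) ^ n := by
          simp [hfdef]
        rw [Polynomial.map_sub, Polynomial.map_pow, Polynomial.map_X, Polynomial.map_C,
          eval_sub, eval_pow, eval_X, eval_C, sub_eq_zero, hfval] at h2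
        exact h2
      -- modulus of z is τ
      have habs : ‖z‖ = τ := by
        have h1' : ‖z‖ ^ n = τ ^ n := by
          rw [← norm_pow, hzn, norm_pow, Complex.norm_real, Real.norm_eq_abs, abs_of_pos hτ0]
        exact (pow_left_inj₀ (by positivity) (le_of_lt hτ0) (by omega)).1 h1'
      exact salem_root_eq τ ⟨h1, hint, hdeg, hinv, hcirc⟩ z hzp habs
    -- g has at most one root, hence degree 1
    have hsep : (g.map f).Separable :=
      ((minpoly.irreducible hintF).separable).map
    have hnodup : (g.map f).roots.Nodup := nodup_roots hsep
    have hcard : (g.map f).roots.card ≤ 1 := by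
      rw [← Multiset.toFinset_card_of_nodup hnodup]
      have : (g.map f).roots.toFinset ⊆ {(τ : ℂ)} := by
        intro x hx
        simp only [Finset.mem_singleton]
        exact hroots x (Multiset.mem_toFinset.1 hx)
      simpa using Finset.card_le_card this
    have hdeg1 : g.natDegree = 1 := by
      have hsplit : (g.map f).Splits := IsAlgClosed.splits _
      have := Polynomial.Splits.natDegree_eq_card_roots hsplit
      rw [natDegree_map] at this
      have hpos := minpoly.natDegree_pos hintF
      rw [this] at hpos ⊢
      omega
    have := (minpoly.natDegree_eq_one_iff).1 hdeg1
    obtain ⟨y, hy⟩ := this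
    rw [← hy]
    exact y.2
  -- Step 3: the fields agree, degree equality
  have hFeq : F = ℚ⟮τ⟯ := by
    apply le_antisymm
    · rw [hF, adjoin_simple_le_iff]
      exact pow_mem (mem_adjoin_simple_self ℚ τ) n
    · rw [adjoin_simple_le_iff]
      exact hτmem
  have hFeq' : (ℚ⟮τ ^ n⟯ : IntermediateField ℚ ℝ) = ℚ⟮τ⟯ := hFeq
  have hdq : q.natDegree = d := by
    have h1' := IntermediateField.adjoin.finrank hintQn
    have h2' := IntermediateField.adjoin.finrank hintQ
    show (minpoly ℚ (τ ^ n)).natDegree = d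
    rw [← hd, ← h2', ← h1', hFeq']
  -- Step 4: properties of roots of q
  have hcast : ((τ ^ n : ℝ) : ℂ) = ((τ : ℂ)) ^ n := by push_cast; ring
  refine ⟨⟨hτn1, hint.pow n, by show 4 ≤ q.natDegree; omega, ?_, ?_⟩, hdq⟩
  · -- (τ^n)⁻¹ is a conjugate
    show Polynomial.aeval (((τ ^ n : ℝ) : ℂ))⁻¹ q = 0
    have := hstep1 _ hinv
    rwa [inv_pow, ← hcast] at this
  · -- modulus condition
    intro w hw hw1 hw2
    -- build an embedding of F sending the generator to w
    have hwroot : Polynomial.aeval w (minpoly ℚ (IntermediateField.adjoin.powerBasis hintQn).gen) = 0 := by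
      rw [IntermediateField.adjoin.powerBasis_gen]
      have hm : minpoly ℚ (AdjoinSimple.gen ℚ (τ ^ n)) = minpoly ℚ (τ ^ n) :=
        IntermediateField.minpoly_gen ℚ (τ ^ n)
      rw [hm]
      exact hw
    set φ : F →ₐ[ℚ] ℂ := (IntermediateField.adjoin.powerBasis hintQn).lift w hwroot with hφ
    set t : F := ⟨τ, hτmem⟩ with ht
    have htpow : t ^ n = AdjoinSimple.gen ℚ (τ ^ n) := by
      apply Subtype.ext
      show τ ^ n = _
      have := AdjoinSimple.algebraMap_gen ℚ (τ ^ n)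
      exact_mod_cast this.symm
    set z : ℂ := φ t with hz
    have hzn : z ^ n = w := by
      rw [hz, ← map_pow, htpow, ← IntermediateField.adjoin.powerBasis_gen hintQn]
      exact (IntermediateField.adjoin.powerBasis hintQn).lift_gen w hwroot
    have hminp : minpoly ℚ t = p := by
      rw [hp, ← minpoly.algebraMap_eq (algebraMap F ℝ).injective t]
      rfl
    have hzroot : Polynomial.aeval z p = 0 := by
      rw [← hminp, hz, Polynomial.aeval_algHom_apply, minpoly.aeval, map_zero]
    have hzτ : z ≠ (τ : ℂ) := by
      intro hzeq
      apply hw1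
      rw [← hzn, hzeq, ← hcast]
    have hzτi : z ≠ ((τ : ℂ))⁻¹ := by
      intro hzeq
      apply hw2
      rw [← hzn, hzeq, inv_pow, hcast]
    have := hcirc z hzroot hzτ hzτi
    rw [← hzn, norm_pow, this, one_pow]
end

section
/- Let α be an irrational real algebraic integer with α > 2, all of whose conjugates other than α lie in the open real interval (−2, 2). Then the real number τ > 1 determined by τ + τ⁻¹ = α (i.e., the larger root of z² − αz + 1 = 0) is a Salem number. -/
open Polynomial IntermediateField

noncomputable def salemTransform {R : Type*} [CommRing R] (f : R[X]) : R[X] :=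
  ∑ i ∈ Finset.range (f.natDegree + 1),
    C (f.coeff i) * (X ^ 2 + 1) ^ i * X ^ (f.natDegree - i)

lemma salemTransform_natDegree_le {R : Type*} [CommRing R] (f : R[X]) :
    (salemTransform f).natDegree ≤ 2 * f.natDegree := by
  apply natDegree_sum_le_of_forall_le
  intro i hi
  have hin : i ≤ f.natDegree := Nat.lt_succ_iff.mp (Finset.mem_range.mp hi)
  calc (C (f.coeff i) * (X ^ 2 + 1) ^ i * X ^ (f.natDegree - i)).natDegree
      ≤ (C (f.coeff i) * (X ^ 2 + 1) ^ i).natDegree + (X ^ (f.natDegree - i) : R[X]).natDegree :=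
        natDegree_mul_le
    _ ≤ ((C (f.coeff i)).natDegree + ((X ^ 2 + 1 : R[X]) ^ i).natDegree)
          + (X ^ (f.natDegree - i) : R[X]).natDegree := by
        gcongr; exact natDegree_mul_le
    _ ≤ (0 + 2 * i) + (f.natDegree - i) := by
        gcongr
        · simp
        · calc ((X ^ 2 + 1 : R[X]) ^ i).natDegree ≤ i * (X ^ 2 + 1 : R[X]).natDegree :=
              natDegree_pow_le
            _ ≤ i * 2 := by
              gcongr
              refine (natDegree_add_le _ _).trans (max_le (natDegree_X_pow_le 2) (by simp))
            _ = 2 * i := by ring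
        · exact natDegree_X_pow_le _
    _ ≤ 2 * f.natDegree := by omega

lemma salemTransform_coeff {R : Type*} [CommRing R] [Nontrivial R] {f : R[X]} (hf : f.Monic) :
    (salemTransform f).coeff (2 * f.natDegree) = 1 := by
  rw [salemTransform, finset_sum_coeff]
  have hmain : ∀ i ∈ Finset.range (f.natDegree + 1), i ≠ f.natDegree →
      (C (f.coeff i) * (X ^ 2 + 1) ^ i * X ^ (f.natDegree - i)).coeff (2 * f.natDegree) = 0 := by
    intro i hi hne
    have hin : i < f.natDegree := lt_of_le_of_ne (Nat.lt_succ_iff.mp (Finset.mem_range.mp hi)) hne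
    apply coeff_eq_zero_of_natDegree_lt
    calc (C (f.coeff i) * (X ^ 2 + 1) ^ i * X ^ (f.natDegree - i)).natDegree
        ≤ ((C (f.coeff i)).natDegree + ((X ^ 2 + 1 : R[X]) ^ i).natDegree)
            + (X ^ (f.natDegree - i) : R[X]).natDegree :=
          natDegree_mul_le.trans (by gcongr; exact natDegree_mul_le)
      _ ≤ (0 + 2 * i) + (f.natDegree - i) := by
          gcongr
          · simp
          · calc ((X ^ 2 + 1 : R[X]) ^ i).natDegree ≤ i * (X ^ 2 + 1 : R[X]).natDegree :=
                natDegree_pow_le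
              _ ≤ i * 2 := by gcongr; refine (natDegree_add_le _ _).trans (max_le (natDegree_X_pow_le 2) (by simp))
              _ = 2 * i := by ring
          · exact natDegree_X_pow_le _
      _ < 2 * f.natDegree := by omega
  rw [Finset.sum_eq_single f.natDegree hmain (by simp)]
  have hm1 : ((X ^ 2 + 1 : R[X])).Monic := by
    simpa using monic_X_pow_add_C (1 : R) (n := 2) (by norm_num)
  have hm : ((X ^ 2 + 1 : R[X]) ^ f.natDegree).Monic := hm1.pow _
  have hnd : ((X ^ 2 + 1 : R[X]) ^ f.natDegree).natDegree = 2 * f.natDegree := by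
    rw [hm1.natDegree_pow]
    have : (X ^ 2 + 1 : R[X]).natDegree = 2 := by
      simpa using natDegree_X_pow_add_C (n := 2) (r := (1 : R))
    rw [this]; ring
  rw [hf.coeff_natDegree, Nat.sub_self, pow_zero, mul_one, map_one, one_mul, ← hnd]
  exact hm.coeff_natDegree

lemma salemTransform_monic {R : Type*} [CommRing R] [Nontrivial R] {f : R[X]} (hf : f.Monic) :
    (salemTransform f).Monic ∧ (salemTransform f).natDegree = 2 * f.natDegree := by
  have hcoeff := salemTransform_coeff hf
  have hle := salemTransform_natDegree_le f
  have hnd : (salemTransform f).natDegree = 2 * f.natDegree :=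
    le_antisymm hle (le_natDegree_of_ne_zero (by rw [hcoeff]; exact one_ne_zero))
  exact ⟨by rw [Monic, leadingCoeff, hnd, hcoeff], hnd⟩

lemma aeval_salemTransform {R K : Type*} [CommRing R] [Field K] [Algebra R K] (f : R[X]) {z : K}
    (hz : z ≠ 0) :
    (aeval z) (salemTransform f) = z ^ f.natDegree * aeval (z + z⁻¹) f := by
  rw [salemTransform, map_sum, aeval_eq_sum_range, Finset.mul_sum]
  refine Finset.sum_congr rfl fun i hi => ?_
  have hin : i ≤ f.natDegree := Nat.lt_succ_iff.mp (Finset.mem_range.mp hi)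
  rw [map_mul, map_mul, aeval_C, map_pow, map_pow, map_add, aeval_X, map_one, map_pow, aeval_X]
  have h1 : z + z⁻¹ = (z ^ 2 + 1) * z⁻¹ := by field_simp
  rw [Algebra.smul_def, h1, mul_pow, pow_sub₀ z hz hin, inv_pow]
  ring

lemma abs_eq_one_of_quad {b : ℝ} (hb1 : -2 < b) (hb2 : b < 2) {z : ℂ} (hz : z ≠ 0)
    (h : z + z⁻¹ = (b : ℂ)) : ‖z‖ = 1 := by
  have hzz : z * z + 1 = (b : ℂ) * z := by
    have h2 := congrArg (· * z) h
    simpa [add_mul, inv_mul_cancel₀ hz] using h2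
  rw [Complex.ext_iff] at hzz
  simp only [Complex.add_re, Complex.add_im, Complex.mul_re, Complex.mul_im,
    Complex.one_re, Complex.one_im, Complex.ofReal_re, Complex.ofReal_im] at hzz
  obtain ⟨h1, h2⟩ := hzz
  by_cases hy : z.im = 0
  · exfalso
    rw [hy] at h1
    nlinarith [sq_nonneg (2 * z.re - b)]
  · have hb : b = 2 * z.re := by
      have h2' : (2 * z.re) * z.im = b * z.im := by nlinarith [h2]
      exact (mul_right_cancel₀ hy h2').symm
    have hsum : z.re ^ 2 + z.im ^ 2 = 1 := by nlinarith [h1, hb]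
    have habs : ‖z‖ ^ 2 = 1 := by
      rw [Complex.sq_norm, Complex.normSq_apply]; nlinarith
    nlinarith [norm_nonneg z, habs]

lemma tau_not_mem_adjoin {α τ : ℝ} (hQα : IsIntegral ℚ α)
    (hn2 : 2 ≤ (minpoly ℚ α).natDegree)
    (hconj : ∀ z : ℂ, Polynomial.aeval z (minpoly ℚ α) = 0 → z ≠ (α : ℂ) →
      z.im = 0 ∧ -2 < z.re ∧ z.re < 2)
    (hτα : α * τ = τ ^ 2 + 1) : τ ∉ (ℚ⟮α⟯ : IntermediateField ℚ ℝ) := by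
  intro hmem
  set p := minpoly ℚ α with hp
  have hp0 : p.map (algebraMap ℚ ℂ) ≠ 0 :=
    (Polynomial.map_ne_zero_iff (algebraMap ℚ ℂ).injective).2 (minpoly.ne_zero hQα)
  have hcard : (p.map (algebraMap ℚ ℂ)).roots.card = p.natDegree :=
    IsAlgClosed.card_roots_map_eq_natDegree_of_injective p (algebraMap ℚ ℂ).injective
  have hsep : (p.map (algebraMap ℚ ℂ)).roots.Nodup :=
    nodup_roots ((minpoly.irreducible hQα).separable.map)
  have hαroot : (α : ℂ) ∈ (p.map (algebraMap ℚ ℂ)).roots := by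
    rw [mem_roots hp0, IsRoot, eval_map, ← aeval_def]
    rw [show ((α : ℝ) : ℂ) = algebraMap ℝ ℂ α from rfl, Polynomial.aeval_algebraMap_apply]
    rw [minpoly.aeval, map_zero]
  obtain ⟨β, hβe⟩ := Multiset.card_pos_iff_exists_mem.1
    (show 0 < ((p.map (algebraMap ℚ ℂ)).roots.erase (α : ℂ)).card by
      rw [Multiset.card_erase_of_mem hαroot, hcard]; exact Nat.lt_pred_iff.mpr (by omega))
  have hβroot : β ∈ (p.map (algebraMap ℚ ℂ)).roots := Multiset.mem_of_mem_erase hβe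
  have hβne : β ≠ (α : ℂ) := ((Multiset.Nodup.mem_erase_iff hsep).1 hβe).1
  have haevalβ : Polynomial.aeval β p = 0 := by
    have h := (mem_roots hp0).1 hβroot
    rwa [IsRoot, eval_map, ← aeval_def] at h
  obtain ⟨him, hre1, hre2⟩ := hconj β haevalβ hβne
  set b := β.re with hb
  have hβeq : β = (b : ℂ) := Complex.ext (by simp [hb]) (by simp [him])
  let pb := IntermediateField.adjoin.powerBasis hQα
  have hgen : minpoly ℚ pb.gen = p := IntermediateField.minpoly_gen ℚ α
  let σ : ℚ⟮α⟯ →ₐ[ℚ] ℂ := pb.lift β (by convert haevalβ using 2; convert hgen; rfl; exact Subsingleton.elim _ _)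
  obtain ⟨Q, hQ⟩ := pb.exists_eq_aeval' ⟨τ, hmem⟩
  have hσgen : σ pb.gen = β := pb.lift_gen β _
  set r : ℝ := Polynomial.aeval b Q with hr
  have hσt : σ ⟨τ, hmem⟩ = (r : ℂ) := by
    rw [hQ, ← Polynomial.aeval_algHom_apply, hσgen, hβeq]
    rw [show ((b : ℝ) : ℂ) = algebraMap ℝ ℂ b from rfl, Polynomial.aeval_algebraMap_apply]
    rfl
  have hEq : pb.gen * (⟨τ, hmem⟩ : ℚ⟮α⟯) = ⟨τ, hmem⟩ * ⟨τ, hmem⟩ + 1 := by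
    apply Subtype.ext
    show α * τ = τ * τ + 1
    nlinarith [hτα]
  have hσEq := congrArg σ hEq
  rw [map_mul, map_add, map_mul, map_one, hσt, hσgen, hβeq] at hσEq
  have hreal : b * r = r * r + 1 := by exact_mod_cast hσEq
  nlinarith [sq_nonneg (2 * r - b)]

theorem salem_of_totally_real (α : ℝ) (hirr : Irrational α) (hint : IsIntegral ℤ α)
    (hα : 2 < α)
    (hconj : ∀ z : ℂ, IsConjugateOf z α → z ≠ (α : ℂ) →
      z.im = 0 ∧ -2 < z.re ∧ z.re < 2)
    (τ : ℝ) (hτ : 1 < τ) (heq : τ + τ⁻¹ = α) :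
    IsSalem τ := by
  have hτ0 : τ ≠ 0 := ne_of_gt (lt_trans zero_lt_one hτ)
  have hτα : α * τ = τ ^ 2 + 1 := by
    rw [← heq]; field_simp
  obtain ⟨f, hfm, hf0⟩ := hint
  have hτint : IsIntegral ℤ τ := by
    refine ⟨salemTransform f, (salemTransform_monic hfm).1, ?_⟩
    rw [← Polynomial.aeval_def, aeval_salemTransform f hτ0, heq, Polynomial.aeval_def, hf0,
      mul_zero]
  have hQτ : IsIntegral ℚ τ := hτint.tower_top
  have hQα : IsIntegral ℚ α := (show IsIntegral ℤ α from ⟨f, hfm, hf0⟩).tower_top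
  set p := minpoly ℚ α with hp
  set n := p.natDegree with hn
  have hn2 : 2 ≤ n := by
    refine (minpoly.two_le_natDegree_iff hQα).2 ?_
    rintro ⟨q, hq⟩
    rw [eq_ratCast (algebraMap ℚ ℝ) q] at hq
    exact hirr ⟨q, hq⟩
  set s := salemTransform p with hsdef
  have hpm : p.Monic := minpoly.monic hQα
  have hsm := salemTransform_monic hpm
  have hsτ : Polynomial.aeval τ s = 0 := by
    rw [hsdef, aeval_salemTransform p hτ0, heq, minpoly.aeval, mul_zero]
  have hdvd : minpoly ℚ τ ∣ s := minpoly.dvd ℚ τ hsτ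
  have hdle : (minpoly ℚ τ).natDegree ≤ 2 * n := hsm.2 ▸ natDegree_le_of_dvd hdvd hsm.1.ne_zero
  have hEF : (ℚ⟮α⟯ : IntermediateField ℚ ℝ) ≤ ℚ⟮τ⟯ := by
    rw [adjoin_simple_le_iff, ← heq]
    exact add_mem (mem_adjoin_simple_self ℚ τ) (inv_mem (mem_adjoin_simple_self ℚ τ))
  haveI hFD : FiniteDimensional ℚ (ℚ⟮τ⟯ : IntermediateField ℚ ℝ) :=
    IntermediateField.adjoin.finiteDimensional hQτ
  have hmul := IntermediateField.finrank_bot_mul_relfinrank hEF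
  rw [IntermediateField.adjoin.finrank hQα, IntermediateField.adjoin.finrank hQτ] at hmul
  have hτnot : τ ∉ (ℚ⟮α⟯ : IntermediateField ℚ ℝ) :=
    tau_not_mem_adjoin hQα hn2 hconj hτα
  have hd : (minpoly ℚ τ).natDegree = 2 * n := by
    set k := IntermediateField.relfinrank (ℚ⟮α⟯ : IntermediateField ℚ ℝ) ℚ⟮τ⟯ with hk
    have hmul' : n * k = (minpoly ℚ τ).natDegree := by rw [← hp] at hmul; exact hmul
    have hdpos : 0 < (minpoly ℚ τ).natDegree := minpoly.natDegree_pos hQτ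
    have hk0 : k ≠ 0 := by rintro h; rw [h, mul_zero] at hmul'; omega
    have hnk2 : n * k ≤ n * 2 := by rw [hmul']; omega
    have hk2 : k ≤ 2 := Nat.le_of_mul_le_mul_left hnk2 (by omega)
    have hk12 : k = 1 ∨ k = 2 := by omega
    rcases hk12 with h1 | h2
    · exfalso
      have hfe : Module.finrank ℚ (ℚ⟮α⟯ : IntermediateField ℚ ℝ) =
          Module.finrank ℚ (ℚ⟮τ⟯ : IntermediateField ℚ ℝ) := by
        rw [h1, mul_one] at hmul'
        rw [IntermediateField.adjoin.finrank hQα, IntermediateField.adjoin.finrank hQτ,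
          ← hp, ← hn, hmul']
      have := IntermediateField.eq_of_le_of_finrank_eq hEF hfe
      exact hτnot (this ▸ mem_adjoin_simple_self ℚ τ)
    · rw [h2] at hmul'; omega
  have hms : minpoly ℚ τ = s := by
    obtain ⟨c, hc⟩ := hdvd
    have hm0 : minpoly ℚ τ ≠ 0 := minpoly.ne_zero hQτ
    have hc0 : c ≠ 0 := by rintro rfl; rw [mul_zero] at hc; exact hsm.1.ne_zero hc
    have hdeg : c.natDegree = 0 := by
      have hnd := Polynomial.natDegree_mul hm0 hc0
      rw [← hc, hsm.2, hd] at hnd; omega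
    have h1 : c.leadingCoeff = 1 := by
      have hl := congrArg Polynomial.leadingCoeff hc
      rw [Polynomial.leadingCoeff_mul, hsm.1.leadingCoeff,
        (minpoly.monic hQτ).leadingCoeff, one_mul] at hl
      exact hl.symm
    have hc1 : c = 1 := by
      rw [Polynomial.eq_C_of_natDegree_eq_zero hdeg]
      rw [Polynomial.leadingCoeff, hdeg] at h1
      rw [h1, map_one]
    rw [hc, hc1, mul_one]
  have hconjinv : IsConjugateOf ((τ : ℂ))⁻¹ τ := by
    show Polynomial.aeval ((τ : ℂ))⁻¹ (minpoly ℚ τ) = 0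
    rw [hms]
    have hcast : ((τ : ℂ))⁻¹ = algebraMap ℝ ℂ τ⁻¹ := by
      simp [Complex.ofReal_inv]
    rw [hcast, Polynomial.aeval_algebraMap_apply,
      aeval_salemTransform p (inv_ne_zero hτ0), inv_inv,
      show τ⁻¹ + τ = α from by rw [add_comm]; exact heq,
      minpoly.aeval, mul_zero, map_zero]
  refine ⟨hτ, hτint, ?_, hconjinv, ?_⟩
  · rw [hd]; omega
  · intro z hz hz1 hz2
    have hz' : Polynomial.aeval z s = 0 := by
      rw [← hms]; exact hz
    have hz0 : z ≠ 0 := by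
      rintro rfl
      have h0 : Polynomial.aeval (0 : ℂ) (minpoly ℚ τ) =
          algebraMap ℚ ℂ ((minpoly ℚ τ).coeff 0) := by
        rw [Polynomial.aeval_def, Polynomial.eval₂_at_zero]
      have hz'' : Polynomial.aeval (0 : ℂ) (minpoly ℚ τ) = 0 := hz
      rw [h0] at hz''
      exact minpoly.coeff_zero_ne_zero hQτ hτ0 ((map_eq_zero_iff _ (algebraMap ℚ ℂ).injective).1 hz'')
    rw [aeval_salemTransform p hz0] at hz'
    have hw : Polynomial.aeval (z + z⁻¹) p = 0 := by
      rcases mul_eq_zero.1 hz' with h | h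
      · exact absurd h (pow_ne_zero _ hz0)
      · exact h
    by_cases hwα : z + z⁻¹ = (α : ℂ)
    · exfalso
      have hzz : z * z + 1 = (α : ℂ) * z := by
        have h2 := congrArg (· * z) hwα
        simpa [add_mul, inv_mul_cancel₀ hz0] using h2
      have hτα' : (α : ℂ) * (τ : ℂ) = (τ : ℂ) ^ 2 + 1 := by exact_mod_cast hτα
      have hfact : (z - (τ : ℂ)) * ((τ : ℂ) * z - 1) = 0 := by
        linear_combination (τ : ℂ) * hzz + z * hτα'
      rcases mul_eq_zero.1 hfact with h | h
      · exact hz1 (sub_eq_zero.1 h)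
      · exact hz2 (eq_inv_of_mul_eq_one_right (sub_eq_zero.1 h))
    · obtain ⟨him, h1, h2⟩ := hconj (z + z⁻¹) hw hwα
      have hwr : z + z⁻¹ = (((z + z⁻¹).re : ℝ) : ℂ) := Complex.ext rfl (by simp [him])
      exact abs_eq_one_of_quad h1 h2 hz0 hwr
end

section
/- Suppose that τ and τ′ are Salem numbers with τ′ ∈ ℚ(τ). Then ℚ(τ′) = ℚ(τ), and if moreover τ′ > τ, then τ′/τ is also a Salem number belonging to ℚ(τ). -/
namespace SalemProof

open Polynomial IntermediateField

/-- conjugation as a `ℚ`-algebra hom on `ℂ`. -/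
noncomputable def conjQ : ℂ →ₐ[ℚ] ℂ := Complex.conjAe.toAlgHom.restrictScalars ℚ

lemma conjQ_apply (z : ℂ) : conjQ z = (starRingEnd ℂ) z := rfl

lemma conj_aeval (p : ℚ[X]) (z : ℂ) (h : Polynomial.aeval z p = 0) :
    Polynomial.aeval ((starRingEnd ℂ) z) p = 0 := by
  rw [show (starRingEnd ℂ) z = conjQ z from rfl, Polynomial.aeval_algHom_apply, h, map_zero]

lemma natDegree_eq_one_of_rat_root {p : ℚ[X]} (hp : Irreducible p) {q : ℚ}
    (hq : Polynomial.aeval (q : ℂ) p = 0) : p.natDegree = 1 := by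
  have h0 : p.eval q = 0 := by
    have h1 : Polynomial.aeval (algebraMap ℚ ℂ q) p = algebraMap ℚ ℂ (p.eval q) := by
      rw [Polynomial.aeval_algebraMap_apply]
      simp [Polynomial.aeval_def, Polynomial.eval₂_eq_eval_map]
    have h2 : algebraMap ℚ ℂ (p.eval q) = 0 := by
      rw [← h1]; exact_mod_cast hq
    exact (map_eq_zero_iff _ (algebraMap ℚ ℂ).injective).mp h2
  obtain ⟨c, hc⟩ := (Polynomial.dvd_iff_isRoot).mpr h0
  rcases hp.isUnit_or_isUnit hc with h | h
  · exact absurd h (by simp [Polynomial.isUnit_iff_degree_eq_zero, Polynomial.degree_X_sub_C])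
  · have hc0 : c ≠ 0 := by rintro rfl; simp at hc; exact hp.ne_zero (by simp [hc])
    have := Polynomial.natDegree_eq_zero_of_isUnit h
    rw [hc, Polynomial.natDegree_mul (Polynomial.X_sub_C_ne_zero q) hc0,
      Polynomial.natDegree_X_sub_C, this]

lemma real_root {τ : ℝ} (h : IsSalem τ) {r : ℝ}
    (hr : Polynomial.aeval ((r : ℝ) : ℂ) (minpoly ℚ τ) = 0) : r = τ ∨ r = τ⁻¹ := by
  have hQ : IsIntegral ℚ τ := h.2.1.tower_top
  by_cases h1 : r = τ
  · exact Or.inl h1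
  by_cases h2 : r = τ⁻¹
  · exact Or.inr h2
  exfalso
  have hne1 : ((r : ℝ) : ℂ) ≠ (τ : ℂ) := by exact_mod_cast h1
  have hne2 : ((r : ℝ) : ℂ) ≠ ((τ : ℂ))⁻¹ := by
    rw [show ((τ : ℂ))⁻¹ = ((τ⁻¹ : ℝ) : ℂ) by push_cast; ring]
    exact_mod_cast h2
  have habs := h.2.2.2.2 _ hr hne1 hne2
  have : |r| = 1 := by simpa using habs
  have hirr := minpoly.irreducible hQ
  rcases abs_eq (by norm_num : (0:ℝ) ≤ 1) |>.mp this with h3 | h3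
  · have hd := natDegree_eq_one_of_rat_root (q := 1) hirr
      (by rw [h3] at hr; exact_mod_cast hr)
    have h4 := h.2.2.1; omega
  · have hd := natDegree_eq_one_of_rat_root (q := -1) hirr
      (by rw [h3] at hr; exact_mod_cast hr)
    have h4 := h.2.2.1; omega


lemma root_trichotomy {τ : ℝ} (h : IsSalem τ) {z : ℂ}
    (hz : Polynomial.aeval z (minpoly ℚ τ) = 0) :
    z = (τ : ℂ) ∨ z = ((τ : ℂ))⁻¹ ∨ (‖z‖ = 1 ∧ z.im ≠ 0) := by
  by_cases h1 : z = (τ : ℂ)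
  · exact Or.inl h1
  by_cases h2 : z = ((τ : ℂ))⁻¹
  · exact Or.inr (Or.inl h2)
  refine Or.inr (Or.inr ⟨h.2.2.2.2 _ hz h1 h2, ?_⟩)
  intro him
  have hzre : z = ((z.re : ℝ) : ℂ) := by
    apply Complex.ext <;> simp [him]
  rcases real_root h (hzre ▸ hz) with h3 | h3
  · exact h1 (by rw [hzre, h3])
  · exact h2 (by rw [hzre, h3]; push_cast; ring)

lemma exists_nonreal_root {τ : ℝ} (h : IsSalem τ) :
    ∃ z : ℂ, Polynomial.aeval z (minpoly ℚ τ) = 0 ∧ z.im ≠ 0 := by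
  have hQ : IsIntegral ℚ τ := h.2.1.tower_top
  set p := minpoly ℚ τ with hp
  have hp0 : p ≠ 0 := minpoly.ne_zero hQ
  have hsep : (p.map (algebraMap ℚ ℂ)).roots.Nodup :=
    (Polynomial.nodup_roots ((minpoly.irreducible hQ).separable.map))
  have hcard : (p.map (algebraMap ℚ ℂ)).roots.card = p.natDegree :=
    ((IsAlgClosed.splits _).natDegree_eq_card_roots.symm.trans
      (Polynomial.natDegree_map_eq_of_injective (algebraMap ℚ ℂ).injective p))
  by_contra hc
  push_neg at hc
  have hsub : (p.map (algebraMap ℚ ℂ)).roots.toFinset ⊆ {(τ : ℂ), ((τ : ℂ))⁻¹} := by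
    intro z hz
    rw [Multiset.mem_toFinset, Polynomial.mem_roots_map hp0] at hz
    have hz' : Polynomial.aeval z p = 0 := by rwa [Polynomial.aeval_def]
    have him := hc z hz'
    have hzre : z = ((z.re : ℝ) : ℂ) := by apply Complex.ext <;> simp [him]
    rcases real_root h (hp ▸ hzre ▸ hz') with h3 | h3 <;>
      simp only [Finset.mem_insert, Finset.mem_singleton]
    · exact Or.inl (by rw [hzre, h3])
    · exact Or.inr (by rw [hzre, h3]; push_cast; ring)
  have hle : (p.map (algebraMap ℚ ℂ)).roots.toFinset.card ≤ 2 :=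
    le_trans (Finset.card_le_card hsub) ((Finset.card_insert_le _ _).trans (by simp))
  rw [Multiset.toFinset_card_of_nodup hsep, hcard] at hle
  have h4 : 4 ≤ p.natDegree := hp ▸ h.2.2.1
  omega

noncomputable def embOfRoot {τ : ℝ} (hQ : IsIntegral ℚ τ) (z : ℂ)
    (hz : Polynomial.aeval z (minpoly ℚ τ) = 0) : ℚ⟮τ⟯ →ₐ[ℚ] ℂ :=
  (IntermediateField.algHomAdjoinIntegralEquiv ℚ hQ).symm
    ⟨z, by rw [Polynomial.mem_aroots]; exact ⟨minpoly.ne_zero hQ, hz⟩⟩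

lemma embOfRoot_gen {τ : ℝ} (hQ : IsIntegral ℚ τ) (z : ℂ)
    (hz : Polynomial.aeval z (minpoly ℚ τ) = 0) :
    embOfRoot hQ z hz (IntermediateField.AdjoinSimple.gen ℚ τ) = z :=
  IntermediateField.algHomAdjoinIntegralEquiv_symm_apply_gen ℚ hQ _

lemma algHom_ext_gen {τ : ℝ} (hQ : IsIntegral ℚ τ) {σ₁ σ₂ : ℚ⟮τ⟯ →ₐ[ℚ] ℂ}
    (h : σ₁ (IntermediateField.AdjoinSimple.gen ℚ τ) =
      σ₂ (IntermediateField.AdjoinSimple.gen ℚ τ)) : σ₁ = σ₂ :=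
  (IntermediateField.adjoin.powerBasis hQ).algHom_ext
    (by rwa [IntermediateField.adjoin.powerBasis_gen])

lemma minpoly_coe {K : IntermediateField ℚ ℝ} (x : K) :
    minpoly ℚ ((x : ℝ)) = minpoly ℚ x := by
  have := minpoly.algebraMap_eq (algebraMap K ℝ).injective x (A := ℚ)
  simpa using this

lemma aeval_image {K : IntermediateField ℚ ℝ} (σ : K →ₐ[ℚ] ℂ) (x : K) :
    Polynomial.aeval (σ x) (minpoly ℚ ((x : ℝ))) = 0 := by
  rw [minpoly_coe, Polynomial.aeval_algHom_apply, minpoly.aeval, map_zero]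

lemma exists_emb_of_root {K : IntermediateField ℚ ℝ} [FiniteDimensional ℚ K] (x : K) (w : ℂ)
    (hw : Polynomial.aeval w (minpoly ℚ ((x : ℝ))) = 0) :
    ∃ σ : K →ₐ[ℚ] ℂ, σ x = w := by
  have hx : IsIntegral ℚ x := IsIntegral.of_finite ℚ x
  rw [minpoly_coe] at hw
  let ρ := (IntermediateField.algHomAdjoinIntegralEquiv (K := ℂ) ℚ hx).symm
    ⟨w, by rw [Polynomial.mem_aroots]; exact ⟨minpoly.ne_zero hx, hw⟩⟩
  have hρ : ρ (IntermediateField.AdjoinSimple.gen ℚ x) = w :=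
    IntermediateField.algHomAdjoinIntegralEquiv_symm_apply_gen ℚ hx _
  obtain ⟨φ, hφ⟩ := IntermediateField.exists_algHom_of_adjoin_splits
    (F := ℚ) (E := K) (K := ℂ) (S := Set.univ)
    (fun s _ => ⟨IsIntegral.of_finite ℚ s, IsAlgClosed.splits _⟩) ρ
    (IntermediateField.adjoin_univ ℚ K)
  refine ⟨φ, ?_⟩
  have := congrArg (fun ψ => ψ (IntermediateField.AdjoinSimple.gen ℚ x)) hφ
  simpa [hρ] using this

lemma aeval_real_to_complex {x : ℝ} {p : ℚ[X]} (h : Polynomial.aeval x p = 0) :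
    Polynomial.aeval ((x : ℝ) : ℂ) p = 0 := by
  have h2 := Polynomial.aeval_algebraMap_apply ℂ x p
  rw [h] at h2
  simpa using h2

lemma aeval_complex_to_real {x : ℝ} {p : ℚ[X]} (h : Polynomial.aeval ((x : ℝ) : ℂ) p = 0) :
    Polynomial.aeval x p = 0 := by
  have h2 := Polynomial.aeval_algebraMap_apply ℂ x p
  rw [show (algebraMap ℝ ℂ) x = ((x : ℝ) : ℂ) from rfl, h] at h2
  exact (map_eq_zero_iff _ (algebraMap ℝ ℂ).injective).mp h2.symm

lemma card_le_natDegree {p : ℚ[X]} (hp : p ≠ 0) (s : Finset ℂ)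
    (hs : ∀ z ∈ s, Polynomial.aeval z p = 0) : s.card ≤ p.natDegree := by
  have hsub : s ⊆ (p.map (algebraMap ℚ ℂ)).roots.toFinset := by
    intro z hz
    rw [Multiset.mem_toFinset, Polynomial.mem_roots_map hp]
    have := hs z hz
    rwa [Polynomial.aeval_def] at this
  calc s.card ≤ _ := Finset.card_le_card hsub
    _ ≤ (p.map (algebraMap ℚ ℂ)).roots.card := Multiset.toFinset_card_le _
    _ ≤ (p.map (algebraMap ℚ ℂ)).natDegree := Polynomial.card_roots' _
    _ = p.natDegree := Polynomial.natDegree_map_eq_of_injective (algebraMap ℚ ℂ).injective p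

end SalemProof

set_option synthInstance.maxHeartbeats 1000000 in
set_option maxHeartbeats 3000000 in
open IntermediateField in
theorem salem_in_salem_field (τ τ' : ℝ) (hτ : IsSalem τ) (hτ' : IsSalem τ')
    (hmem : τ' ∈ ℚ⟮τ⟯) :
    ℚ⟮τ'⟯ = ℚ⟮τ⟯ ∧ (τ < τ' → IsSalem (τ' / τ) ∧ τ' / τ ∈ ℚ⟮τ⟯) := by
  open SalemProof Polynomial in
  have hτpos : (0:ℝ) < τ := lt_trans one_pos hτ.1
  have hτ'pos : (0:ℝ) < τ' := lt_trans one_pos hτ'.1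
  have hQτ : IsIntegral ℚ τ := hτ.2.1.tower_top
  have hQτ' : IsIntegral ℚ τ' := hτ'.2.1.tower_top
  haveI hfd : FiniteDimensional ℚ ℚ⟮τ⟯ := IntermediateField.adjoin.finiteDimensional hQτ
  set t : ℚ⟮τ⟯ := IntermediateField.AdjoinSimple.gen ℚ τ with ht_def
  have htτ : (t : ℝ) = τ := rfl
  set t' : ℚ⟮τ⟯ := ⟨τ', hmem⟩ with ht'_def
  have ht'τ : (t' : ℝ) = τ' := rfl
  -- the inclusion
  let ι : ℚ⟮τ⟯ →ₐ[ℚ] ℂ :=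
    ((Complex.ofRealAm.restrictScalars ℚ).comp (IntermediateField.val ℚ⟮τ⟯))
  have hι : ∀ x : ℚ⟮τ⟯, ι x = ((x : ℝ) : ℂ) := fun x => rfl
  -- the reciprocal embedding
  have hτc : Polynomial.aeval ((τ:ℂ))⁻¹ (minpoly ℚ τ) = 0 := hτ.2.2.2.1
  let σ₀ : ℚ⟮τ⟯ →ₐ[ℚ] ℂ := SalemProof.embOfRoot hQτ _ hτc
  have hσ₀t : σ₀ t = ((τ:ℂ))⁻¹ := SalemProof.embOfRoot_gen hQτ _ hτc
  -- each embedding sends an element to a root of its minpoly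
  have himg : ∀ (σ : ℚ⟮τ⟯ →ₐ[ℚ] ℂ) (x : ℚ⟮τ⟯),
      Polynomial.aeval (σ x) (minpoly ℚ ((x : ℝ))) = 0 := fun σ x => SalemProof.aeval_image σ x
  -- the polynomial expressing τ' in terms of τ
  obtain ⟨P, hP⟩ := (IntermediateField.adjoin.powerBasis hQτ).exists_eq_aeval' t'
  rw [IntermediateField.adjoin.powerBasis_gen] at hP
  have hσt' : ∀ σ : ℚ⟮τ⟯ →ₐ[ℚ] ℂ, σ t' = Polynomial.aeval (σ t) P := by
    intro σ; rw [hP, Polynomial.aeval_algHom_apply]; rfl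
  have ht0 : t ≠ 0 := by
    intro h; apply absurd (congrArg (Subtype.val) h); rw [htτ]; exact ne_of_gt hτpos
  set u : ℚ⟮τ⟯ := Polynomial.aeval t⁻¹ P with hu_def
  have hσu : ∀ σ : ℚ⟮τ⟯ →ₐ[ℚ] ℂ, σ u = Polynomial.aeval ((σ t))⁻¹ P := by
    intro σ; rw [hu_def, ← Polynomial.aeval_algHom_apply, map_inv₀]
  have hιt : ι t = (τ : ℂ) := rfl
  have hιt' : ι t' = (τ' : ℂ) := rfl
  -- trichotomy for images of t
  have htri : ∀ σ : ℚ⟮τ⟯ →ₐ[ℚ] ℂ, σ t = (τ:ℂ) ∨ σ t = ((τ:ℂ))⁻¹ ∨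
      (‖σ t‖ = 1 ∧ (σ t).im ≠ 0) := by
    intro σ
    exact SalemProof.root_trichotomy hτ (by simpa [htτ] using himg σ t)
  have hext : ∀ {σ₁ σ₂ : ℚ⟮τ⟯ →ₐ[ℚ] ℂ}, σ₁ t = σ₂ t → σ₁ = σ₂ :=
    fun h => SalemProof.algHom_ext_gen hQτ h
  -- σ₀ maps t' to a real number
  have hσ₀real : (σ₀ t').im = 0 := by
    have hconj : SalemProof.conjQ.comp σ₀ = σ₀ := by
      apply hext
      show (starRingEnd ℂ) (σ₀ t) = σ₀ t
      rw [hσ₀t]; simp [Complex.conj_ofReal, map_inv₀]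
    have := congrArg (fun ψ => ψ t') hconj
    simp only [AlgHom.comp_apply] at this
    have h2 : (starRingEnd ℂ) (σ₀ t') = σ₀ t' := this
    exact Complex.conj_eq_iff_im.mp h2
  have hinj : Function.Injective ⇑σ₀ := RingHom.injective (σ₀ : ℚ⟮τ⟯ →+* ℂ)
  have hσ₀u : σ₀ u = (τ' : ℂ) := by
    rw [hσu σ₀, hσ₀t, inv_inv]
    have h2 := hσt' ι
    rw [hιt, hιt'] at h2
    exact h2.symm
  -- conj z = z⁻¹ for |z| = 1
  have hcinv : ∀ z : ℂ, ‖z‖ = 1 → (starRingEnd ℂ) z = z⁻¹ := by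
    intro z hz
    have h1 : z * (starRingEnd ℂ) z = 1 := by
      rw [Complex.mul_conj]
      rw [Complex.normSq_eq_norm_sq, hz]
      norm_num
    exact eq_inv_of_mul_eq_one_right h1
  -- case A : σ₀ t' = (τ')⁻¹
  have hA : σ₀ t' = ((τ':ℂ))⁻¹ := by
    have hroot : Polynomial.aeval (σ₀ t') (minpoly ℚ τ') = 0 := by
      simpa [ht'τ] using himg σ₀ t'
    have hre : σ₀ t' = (((σ₀ t').re : ℝ) : ℂ) := by
      apply Complex.ext <;> simp [hσ₀real]
    rw [hre] at hroot
    rcases SalemProof.real_root hτ' hroot with hB | hA'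
    · -- case B: contradiction
      exfalso
      have hB' : σ₀ t' = (τ' : ℂ) := by rw [hre, hB]
      have huu : u = t' := hinj (by rw [hσ₀u, hB'])
      obtain ⟨w, hw, him⟩ := SalemProof.exists_nonreal_root hτ'
      obtain ⟨σ, hσ⟩ := SalemProof.exists_emb_of_root t' w (by rw [ht'τ]; exact hw)
      rcases htri σ with h1 | h1 | h1
      · have h2 : σ = ι := hext (by rw [h1, hιt])
        apply him; rw [← hσ, h2, hιt']; simp
      · have h2 : σ = σ₀ := hext (by rw [h1, hσ₀t])
        apply him; rw [← hσ, h2, hB']; simp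
      · apply him
        rw [← hσ]
        apply Complex.conj_eq_iff_im.mp
        calc (starRingEnd ℂ) (σ t')
            = Polynomial.aeval ((starRingEnd ℂ) (σ t)) P := by
              rw [hσt' σ]
              exact (Polynomial.aeval_algHom_apply SalemProof.conjQ _ P).symm
          _ = Polynomial.aeval ((σ t))⁻¹ P := by rw [hcinv _ h1.1]
          _ = σ u := (hσu σ).symm
          _ = σ t' := by rw [huu]
    · rw [hre, hA']; push_cast; ring
  -- u * t' = 1
  have huinv : u * t' = 1 := by
    apply hinj
    rw [map_mul, map_one, hA, hσ₀u]
    have : (τ':ℂ) ≠ 0 := by exact_mod_cast ne_of_gt hτ'pos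
    field_simp
  -- modulus-one embeddings send t' to the unit circle
  have hL4 : ∀ σ : ℚ⟮τ⟯ →ₐ[ℚ] ℂ, (σ t).im ≠ 0 → ‖σ t'‖ = 1 := by
    intro σ him
    rcases htri σ with h1 | h1 | h1
    · exact absurd (by rw [h1]; simp) him
    · exact absurd (by rw [h1]; simp) him
    · have h2 : (starRingEnd ℂ) (σ t') * σ t' = 1 := by
        calc (starRingEnd ℂ) (σ t') * σ t'
            = Polynomial.aeval ((starRingEnd ℂ) (σ t)) P * σ t' := by
              rw [hσt' σ]
              congr 1
              exact (Polynomial.aeval_algHom_apply SalemProof.conjQ _ P).symm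
          _ = σ u * σ t' := by rw [hcinv _ h1.1, ← hσu σ]
          _ = σ (u * t') := by rw [map_mul]
          _ = 1 := by rw [huinv, map_one]
      have h3 := congrArg (‖·‖) h2
      rw [norm_mul, norm_one, Complex.norm_conj] at h3
      rcases mul_self_eq_one_iff.mp h3 with h | h
      · exact h
      · exfalso
        have := norm_nonneg (σ t')
        linarith [this, h]
  -- only the inclusion fixes τ'
  have hL5 : ∀ σ : ℚ⟮τ⟯ →ₐ[ℚ] ℂ, σ t' = (τ':ℂ) → σ = ι := by
    intro σ hσ
    rcases htri σ with h1 | h1 | h1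
    · exact hext (by rw [h1, hιt])
    · exfalso
      have h2 : σ = σ₀ := hext (by rw [h1, hσ₀t])
      rw [h2, hA] at hσ
      have h3 : (τ' : ℝ)⁻¹ = τ' := by exact_mod_cast hσ
      have h4 : τ' * τ' = 1 := by
        nth_rewrite 1 [← h3]
        exact inv_mul_cancel₀ (ne_of_gt hτ'pos)
      nlinarith [hτ'.1, h4]
    · exfalso
      have h2 := hL4 σ h1.2
      rw [hσ, Complex.norm_real, Real.norm_eq_abs, abs_of_pos hτ'pos] at h2
      linarith [hτ'.1]
  -- Part 1 : counting embeddings fixing τ'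
  have hFK : ℚ⟮τ'⟯ ≤ ℚ⟮τ⟯ := by
    rw [IntermediateField.adjoin_simple_le_iff]; exact hmem
  letI : Algebra ℚ⟮τ'⟯ ℚ⟮τ⟯ := (IntermediateField.inclusion hFK).toRingHom.toAlgebra
  letI : Algebra ℚ⟮τ'⟯ ℂ :=
    ((Complex.ofRealAm.restrictScalars ℚ).comp (IntermediateField.val ℚ⟮τ'⟯)).toRingHom.toAlgebra
  haveI : IsScalarTower ℚ ℚ⟮τ'⟯ ℚ⟮τ⟯ := IsScalarTower.of_algebraMap_eq fun q => rfl
  haveI := IsScalarTower.of_algebraMap_eq (R := ℚ) (S := ℚ⟮τ'⟯) (A := ℂ) fun q => by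
    apply Complex.ext <;> simp [RingHom.algebraMap_toAlgebra]
  haveI : FiniteDimensional ℚ⟮τ'⟯ ℚ⟮τ⟯ := Module.Finite.right ℚ _ _
  haveI : CharZero ℚ⟮τ'⟯ := charZero_of_injective_algebraMap (algebraMap ℚ ℚ⟮τ'⟯).injective
  have hcard := AlgHom.card ℚ⟮τ'⟯ ℚ⟮τ⟯ ℂ
  haveI : Nonempty (ℚ⟮τ⟯ →ₐ[ℚ⟮τ'⟯] ℂ) :=
    ⟨{ toRingHom := ι.toRingHom, commutes' := fun x => rfl }⟩
  have hgen' : t' = algebraMap ℚ⟮τ'⟯ ℚ⟮τ⟯ (IntermediateField.AdjoinSimple.gen ℚ τ') :=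
    Subtype.ext rfl
  haveI hss : Subsingleton (ℚ⟮τ⟯ →ₐ[ℚ⟮τ'⟯] ℂ) := by
    constructor
    intro φ ψ
    have key : ∀ χ : ℚ⟮τ⟯ →ₐ[ℚ⟮τ'⟯] ℂ, (χ.restrictScalars ℚ) = ι := by
      intro χ
      apply hL5
      show χ t' = (τ':ℂ)
      rw [hgen', χ.commutes]
      rfl
    have h2 := (key φ).trans (key ψ).symm
    ext x
    exact congrArg (fun ψ' => ψ' x) h2
  have h1 : Module.finrank ℚ⟮τ'⟯ ℚ⟮τ⟯ = 1 := by
    rw [← hcard]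
    have hle := Fintype.card_le_one_iff_subsingleton.mpr hss
    have hpos := Fintype.card_pos (α := ℚ⟮τ⟯ →ₐ[ℚ⟮τ'⟯] ℂ)
    omega
  haveI : FiniteDimensional ℚ ℚ⟮τ'⟯ := IntermediateField.adjoin.finiteDimensional hQτ'
  have hmul := Module.finrank_mul_finrank ℚ ℚ⟮τ'⟯ ℚ⟮τ⟯
  rw [h1, mul_one] at hmul
  have hpart1 : ℚ⟮τ'⟯ = ℚ⟮τ⟯ :=
    IntermediateField.eq_of_le_of_finrank_le hFK (le_of_eq hmul.symm)
  refine ⟨hpart1, ?_⟩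
  intro hlt
  set μ := τ' / τ with hμ_def
  have hμpos : 0 < μ := div_pos hτ'pos hτpos
  have hμ1 : 1 < μ := (one_lt_div hτpos).mpr hlt
  -- τ⁻¹ is an algebraic integer
  have hτinv : IsIntegral ℤ (τ⁻¹ : ℝ) := by
    refine ⟨minpoly ℤ τ, minpoly.monic hτ.2.1, ?_⟩
    have hfrac : minpoly ℚ τ = (minpoly ℤ τ).map (algebraMap ℤ ℚ) :=
      minpoly.isIntegrallyClosed_eq_field_fractions ℚ ℝ hτ.2.1
    have hC : Polynomial.aeval ((τ⁻¹ : ℝ) : ℂ) (minpoly ℚ τ) = 0 := by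
      rw [show ((τ⁻¹ : ℝ) : ℂ) = ((τ : ℂ))⁻¹ by push_cast; ring]
      exact hτ.2.2.2.1
    have hR : Polynomial.aeval (τ⁻¹ : ℝ) (minpoly ℚ τ) = 0 :=
      SalemProof.aeval_complex_to_real hC
    rw [hfrac, Polynomial.aeval_map_algebraMap] at hR
    rwa [Polynomial.aeval_def] at hR
  have hμint : IsIntegral ℤ μ := by
    rw [hμ_def, div_eq_mul_inv]
    exact hτ'.2.1.mul hτinv
  have hμQ : IsIntegral ℚ μ := hμint.tower_top
  have hμmem : μ ∈ ℚ⟮τ⟯ :=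
    IntermediateField.div_mem _ hmem (IntermediateField.mem_adjoin_simple_self ℚ τ)
  set mμ : ℚ⟮τ⟯ := ⟨μ, hμmem⟩ with hmμ_def
  have hmμcoe : (mμ : ℝ) = μ := rfl
  have hmμ : mμ = t' / t := by
    apply Subtype.ext
    show μ = algebraMap ℚ⟮τ⟯ ℝ (t' / t)
    rw [map_div₀]
    show μ = (t' : ℝ) / (t : ℝ)
    rw [htτ, ht'τ]
  have hσdiv : ∀ σ : ℚ⟮τ⟯ →ₐ[ℚ] ℂ, σ mμ = σ t' / σ t := by
    intro σ; rw [hmμ, map_div₀]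
  -- image of mμ under σ₀
  have hσ₀mμ : σ₀ mμ = ((μ : ℂ))⁻¹ := by
    rw [hσdiv σ₀, hσ₀t, hA, hμ_def]
    have h1 : (τ : ℂ) ≠ 0 := by exact_mod_cast ne_of_gt hτpos
    have h2 : (τ' : ℂ) ≠ 0 := by exact_mod_cast ne_of_gt hτ'pos
    push_cast
    field_simp
  -- every root of the minimal polynomial of μ is attained by an embedding
  have hattain : ∀ w : ℂ, Polynomial.aeval w (minpoly ℚ μ) = 0 →
      ∃ σ : ℚ⟮τ⟯ →ₐ[ℚ] ℂ, σ mμ = w := by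
    intro w hw
    exact SalemProof.exists_emb_of_root mμ w (by rw [hmμcoe]; exact hw)
  -- classification of the values of embeddings at mμ
  have hval : ∀ σ : ℚ⟮τ⟯ →ₐ[ℚ] ℂ,
      σ mμ = (μ : ℂ) ∨ σ mμ = ((μ : ℂ))⁻¹ ∨ ‖σ mμ‖ = 1 := by
    intro σ
    rcases htri σ with h1 | h1 | h1
    · left
      have h2 : σ = ι := hext (by rw [h1, hιt])
      rw [h2]; rfl
    · right; left
      have h2 : σ = σ₀ := hext (by rw [h1, hσ₀t])
      rw [h2, hσ₀mμ]
    · right; right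
      rw [hσdiv σ, norm_div, h1.1, hL4 σ h1.2]
      norm_num
  -- basic root facts
  have hpne : minpoly ℚ μ ≠ 0 := minpoly.ne_zero hμQ
  have hrootμ : Polynomial.aeval ((μ : ℝ) : ℂ) (minpoly ℚ μ) = 0 :=
    SalemProof.aeval_real_to_complex (minpoly.aeval ℚ μ)
  have hrootμinv : Polynomial.aeval ((μ : ℂ))⁻¹ (minpoly ℚ μ) = 0 := by
    rw [← hσ₀mμ]
    simpa [hmμcoe] using himg σ₀ mμ
  have hμne : ((μ : ℝ) : ℂ) ≠ ((μ : ℂ))⁻¹ := by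
    rw [show ((μ : ℂ))⁻¹ = ((μ⁻¹ : ℝ) : ℂ) by push_cast; ring]
    intro h
    have h2 : μ = μ⁻¹ := by exact_mod_cast h
    have h3 : μ * μ = 1 := by
      nth_rewrite 2 [h2]
      exact mul_inv_cancel₀ (ne_of_gt hμpos)
    nlinarith [hμ1, h3]
  -- a nonreal conjugate of μ of modulus one
  obtain ⟨z₀, hz₀, hz₀im⟩ := SalemProof.exists_nonreal_root hτ
  set σz : ℚ⟮τ⟯ →ₐ[ℚ] ℂ := SalemProof.embOfRoot hQτ z₀ hz₀ with hσz_def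
  have hσzt : σz t = z₀ := SalemProof.embOfRoot_gen hQτ z₀ hz₀
  set w₀ : ℂ := σz mμ with hw₀_def
  have hw₀root : Polynomial.aeval w₀ (minpoly ℚ μ) = 0 := by
    simpa [hmμcoe] using himg σz mμ
  have hw₀abs : ‖w₀‖ = 1 := by
    rcases htri σz with h1 | h1 | h1
    · exfalso; apply hz₀im; rw [← hσzt, h1]; simp
    · exfalso; apply hz₀im; rw [← hσzt, h1]; simp
    · rw [hw₀_def, hσdiv σz, norm_div, h1.1, hL4 σz h1.2]
      norm_num
  -- μ and μ⁻¹ are distinct roots, so the degree is at least 2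
  have hdeg2 : 2 ≤ (minpoly ℚ μ).natDegree := by
    have hcard2 := SalemProof.card_le_natDegree hpne {((μ : ℝ) : ℂ), ((μ : ℂ))⁻¹}
      (by
        intro z hz
        rcases Finset.mem_insert.mp hz with h | h
        · rw [h]; exact hrootμ
        · rw [Finset.mem_singleton.mp h]; exact hrootμinv)
    rw [Finset.card_insert_of_notMem (by simpa using hμne), Finset.card_singleton] at hcard2
    exact hcard2
  -- w₀ is not real
  have hw₀im : w₀.im ≠ 0 := by
    intro him
    have hre : w₀ = ((w₀.re : ℝ) : ℂ) := by apply Complex.ext <;> simp [him]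
    have habs : |w₀.re| = 1 := by
      rw [hre] at hw₀abs
      simpa using hw₀abs
    rcases abs_eq (by norm_num : (0:ℝ) ≤ 1) |>.mp habs with h3 | h3
    · have := SalemProof.natDegree_eq_one_of_rat_root (minpoly.irreducible hμQ)
        (q := 1) (by rw [hre, h3] at hw₀root; exact_mod_cast hw₀root)
      omega
    · have := SalemProof.natDegree_eq_one_of_rat_root (minpoly.irreducible hμQ)
        (q := -1) (by rw [hre, h3] at hw₀root; exact_mod_cast hw₀root)
      omega
  -- degree at least 4
  have hdeg4 : 4 ≤ (minpoly ℚ μ).natDegree := by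
    have hconjroot : Polynomial.aeval ((starRingEnd ℂ) w₀) (minpoly ℚ μ) = 0 :=
      SalemProof.conj_aeval _ _ hw₀root
    have hw₀ne1 : w₀ ≠ ((μ : ℝ) : ℂ) := by
      intro h; apply hw₀im; rw [h]; simp
    have hw₀ne2 : w₀ ≠ ((μ : ℂ))⁻¹ := by
      intro h; apply hw₀im; rw [h]
      rw [show ((μ : ℂ))⁻¹ = ((μ⁻¹ : ℝ) : ℂ) by push_cast; ring]
      simp
    have hcw₀ne1 : (starRingEnd ℂ) w₀ ≠ ((μ : ℝ) : ℂ) := by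
      intro h
      apply hw₀im
      have := congrArg Complex.im h
      simpa using this
    have hcw₀ne2 : (starRingEnd ℂ) w₀ ≠ ((μ : ℂ))⁻¹ := by
      intro h
      apply hw₀im
      have h2 : ((starRingEnd ℂ) w₀).im = 0 := by
        rw [h, show ((μ : ℂ))⁻¹ = ((μ⁻¹ : ℝ) : ℂ) by push_cast; ring]
        simp
      simpa using h2
    have hw₀nec : w₀ ≠ (starRingEnd ℂ) w₀ := by
      intro h
      apply hw₀im
      exact Complex.conj_eq_iff_im.mp h.symm
    have hcard4 := SalemProof.card_le_natDegree hpne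
      {((μ : ℝ) : ℂ), ((μ : ℂ))⁻¹, w₀, (starRingEnd ℂ) w₀}
      (by
        intro z hz
        simp only [Finset.mem_insert, Finset.mem_singleton] at hz
        rcases hz with h | h | h | h
        · rw [h]; exact hrootμ
        · rw [h]; exact hrootμinv
        · rw [h]; exact hw₀root
        · rw [h]; exact hconjroot)
    have hc4 : ({((μ : ℝ) : ℂ), ((μ : ℂ))⁻¹, w₀, (starRingEnd ℂ) w₀} : Finset ℂ).card = 4 := by
      rw [Finset.card_insert_of_notMem (by simp [hμne, hw₀ne1.symm, hcw₀ne1.symm]),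
        Finset.card_insert_of_notMem (by simp [hw₀ne2.symm, hcw₀ne2.symm]),
        Finset.card_insert_of_notMem (by simp [hw₀nec]),
        Finset.card_singleton]
    omega
  -- assemble the Salem conditions for μ
  refine ⟨⟨hμ1, hμint, hdeg4, hrootμinv, ?_⟩, hμmem⟩
  intro z hz hne1 hne2
  obtain ⟨σ, hσ⟩ := hattain z hz
  rcases hval σ with h | h | h
  · exact absurd (by rw [← hσ, h]) hne1
  · exact absurd (by rw [← hσ, h]) hne2
  · rw [← hσ]; exact h
end

section
/- Let K = ℚ(τ) for some Salem number τ. Then there is a Salem number τ₁ ∈ K such that the set of Salem numbers contained in K is exactly the set of positive integer powers {τ₁ⁿ : n ≥ 1} of τ₁. -/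
open IntermediateField Polynomial

section helpers

variable {τ : ℝ}

lemma rat_root_eq (x : ℝ) (hx : IsIntegral ℚ x) (q : ℚ)
    (h : aeval (q : ℂ) (minpoly ℚ x) = 0) : x = (q : ℝ) := by
  have hq : aeval q (minpoly ℚ x) = 0 := by
    have h2 : ((aeval q (minpoly ℚ x) : ℚ) : ℂ) = 0 := by
      rw [show ((q:ℂ)) = algebraMap ℚ ℂ q from by simp] at h
      rw [aeval_algebraMap_apply] at h
      simpa using h
    exact_mod_cast h2
  have hdvd : X - C q ∣ minpoly ℚ x := dvd_iff_isRoot.mpr (by simpa using hq)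
  obtain ⟨b, hb⟩ := hdvd
  rcases (minpoly.irreducible hx).isUnit_or_isUnit hb with h1 | h2
  · exact absurd h1 (Polynomial.not_isUnit_X_sub_C q)
  · obtain ⟨r, hr, rfl⟩ := Polynomial.isUnit_iff.mp h2
    have h3 := minpoly.aeval ℚ x
    rw [hb] at h3
    simp only [map_mul, aeval_C, map_sub, aeval_X] at h3
    have hr0 : (r : ℝ) ≠ 0 := by exact_mod_cast hr.ne_zero
    rcases mul_eq_zero.mp h3 with h4 | h4
    · have h5 : x - (q:ℝ) = 0 := by simpa using h4
      linarith [sub_eq_zero.mp h5]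
    · exfalso; apply hr0; simpa using h4

lemma salem_root_cases (hτ : IsSalem τ) (z : ℂ) (hz : aeval z (minpoly ℚ τ) = 0) :
    z = (τ : ℂ) ∨ z = ((τ : ℂ))⁻¹ ∨ (‖z‖ = 1 ∧ z.im ≠ 0) := by
  by_cases h1 : z = (τ : ℂ); · exact Or.inl h1
  by_cases h2 : z = ((τ : ℂ))⁻¹; · exact Or.inr (Or.inl h2)
  have habs := hτ.2.2.2.2 z hz h1 h2
  refine Or.inr (Or.inr ⟨habs, ?_⟩)
  intro him
  have hzre : z = (z.re : ℂ) := Complex.ext rfl (by simp [him])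
  have : |z.re| = 1 := by
    rw [hzre] at habs; simpa using habs
  have hτQ : IsIntegral ℚ τ := hτ.2.1.tower_top
  rcases abs_eq (by norm_num : (0:ℝ) ≤ 1) |>.mp this with h | h
  · have : τ = ((1:ℚ):ℝ) := rat_root_eq τ hτQ 1 (by rw [hzre, h] at hz; simpa using hz)
    simp at this; linarith [hτ.1]
  · have : τ = ((-1:ℚ):ℝ) := rat_root_eq τ hτQ (-1) (by rw [hzre, h] at hz; simpa using hz)
    simp at this; linarith [hτ.1]

lemma salem_inv_integral (hτ : IsSalem τ) : IsIntegral ℤ τ⁻¹ := by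
  have hint := hτ.2.1
  have hmap : minpoly ℚ τ = (minpoly ℤ τ).map (algebraMap ℤ ℚ) :=
    minpoly.isIntegrallyClosed_eq_field_fractions ℚ ℝ hint
  have h0 : aeval ((τ:ℂ))⁻¹ (minpoly ℤ τ) = 0 := by
    have h1 := hτ.2.2.2.1
    rw [IsConjugateOf, hmap, aeval_map_algebraMap] at h1
    exact h1
  have h2 : IsIntegral ℤ (((τ⁻¹ : ℝ) : ℂ)) := by
    refine ⟨minpoly ℤ τ, minpoly.monic hint, ?_⟩
    rw [← aeval_def]; push_cast; exact h0
  rwa [show ((τ⁻¹:ℝ):ℂ) = algebraMap ℝ ℂ τ⁻¹ from rfl,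
    isIntegral_algebraMap_iff (algebraMap ℝ ℂ).injective] at h2

end helpers

section field

variable (τ : ℝ)

noncomputable def embR : ℚ⟮τ⟯ →+* ℂ :=
  Complex.ofRealHom.comp (algebraMap ℚ⟮τ⟯ ℝ)

@[simp] lemma embR_apply (x : ℚ⟮τ⟯) : embR τ x = ((x : ℝ) : ℂ) := rfl

lemma gen_coe : ((AdjoinSimple.gen ℚ τ : ℚ⟮τ⟯) : ℝ) = τ := rfl

variable {τ}

lemma minpoly_coe (x : ℚ⟮τ⟯) : minpoly ℚ (x : ℝ) = minpoly ℚ x :=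
  minpoly.algebraMap_eq (algebraMap ℚ⟮τ⟯ ℝ).injective x

lemma hom_ext (hi : IsIntegral ℚ τ) (φ ψ : ℚ⟮τ⟯ →+* ℂ)
    (h : φ (AdjoinSimple.gen ℚ τ) = ψ (AdjoinSimple.gen ℚ τ)) : φ = ψ := by
  have h2 : φ.toRatAlgHom = ψ.toRatAlgHom := by
    apply (adjoin.powerBasis hi).algHom_ext
    rw [adjoin.powerBasis_gen]
    exact h
  exact (RingHom.equivRatAlgHom _ _).injective h2

lemma embed_root (φ : ℚ⟮τ⟯ →+* ℂ) (x : ℚ⟮τ⟯) : aeval (φ x) (minpoly ℚ (x : ℝ)) = 0 := by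
  rw [minpoly_coe]
  have : aeval (φ.toRatAlgHom x) (minpoly ℚ x) = 0 := by
    rw [Polynomial.aeval_algHom_apply, minpoly.aeval, map_zero]
  exact this

lemma exists_embed_of_root (hi : IsIntegral ℚ τ) (x : ℚ⟮τ⟯) (z : ℂ)
    (hz : aeval z (minpoly ℚ (x : ℝ)) = 0) : ∃ φ : ℚ⟮τ⟯ →+* ℂ, φ x = z := by
  haveI : FiniteDimensional ℚ ℚ⟮τ⟯ := IntermediateField.adjoin.finiteDimensional hi
  haveI : NumberField ℚ⟮τ⟯ := ⟨⟩
  have hx : IsIntegral ℚ x := IsIntegral.of_finite ℚ x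
  have hmem : z ∈ (minpoly ℚ x).rootSet ℂ := by
    rw [mem_rootSet]
    exact ⟨minpoly.ne_zero hx, by rwa [minpoly_coe] at hz⟩
  rw [← NumberField.Embeddings.range_eval_eq_rootSet_minpoly ℚ⟮τ⟯ ℂ x] at hmem
  exact hmem

lemma exists_iota (hτi : IsIntegral ℚ τ) (hτc : aeval ((τ:ℂ))⁻¹ (minpoly ℚ τ) = 0) :
    ∃ ι : ℚ⟮τ⟯ →ₐ[ℚ] ℚ⟮τ⟯, ι (AdjoinSimple.gen ℚ τ) = (AdjoinSimple.gen ℚ τ)⁻¹ := by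
  set t := AdjoinSimple.gen ℚ τ with ht
  have hroot : aeval (t⁻¹) (minpoly ℚ (adjoin.powerBasis hτi).gen) = 0 := by
    rw [adjoin.powerBasis_gen]; erw [minpoly_gen ℚ τ]
    have h1 : (embR τ).toRatAlgHom (aeval t⁻¹ (minpoly ℚ τ)) = 0 := by
      rw [← Polynomial.aeval_algHom_apply]
      have h2 : (embR τ).toRatAlgHom t⁻¹ = ((τ:ℂ))⁻¹ := by
        show embR τ t⁻¹ = _
        rw [map_inv₀]
        norm_num [embR_apply, show ((t:ℚ⟮τ⟯):ℝ) = τ from rfl]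
      rw [h2]
      exact hτc
    have h3 : embR τ (aeval t⁻¹ (minpoly ℚ τ)) = 0 := h1
    exact (_root_.map_eq_zero (embR τ)).mp h3
  exact ⟨(adjoin.powerBasis hτi).lift t⁻¹ hroot, by
    have := (adjoin.powerBasis hτi).lift_gen t⁻¹ hroot
    rwa [adjoin.powerBasis_gen] at this⟩

end field
section iota

variable {τ : ℝ}

lemma embed_root_tau (φ : ℚ⟮τ⟯ →+* ℂ) : aeval (φ (AdjoinSimple.gen ℚ τ)) (minpoly ℚ τ) = 0 :=
  embed_root φ (AdjoinSimple.gen ℚ τ)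

lemma minpoly_rootSet_ncard (x : ℝ) (hx : IsIntegral ℚ x) :
    ((minpoly ℚ x).rootSet ℂ).ncard = (minpoly ℚ x).natDegree := by
  have hsep : (minpoly ℚ x).Separable := (minpoly.irreducible hx).separable
  have h := Polynomial.card_rootSet_eq_natDegree hsep
    (IsAlgClosed.splits ((minpoly ℚ x).map (algebraMap ℚ ℂ)))
  rw [← h, Set.ncard_eq_toFinset_card']
  simp [Set.toFinset_card]

lemma conj_embed (hτ : IsSalem τ) (ι : ℚ⟮τ⟯ →ₐ[ℚ] ℚ⟮τ⟯)
    (hι : ι (AdjoinSimple.gen ℚ τ) = (AdjoinSimple.gen ℚ τ)⁻¹)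
    (φ : ℚ⟮τ⟯ →+* ℂ) (hc : (φ (AdjoinSimple.gen ℚ τ)).im ≠ 0) (x : ℚ⟮τ⟯) :
    φ (ι x) = (starRingEnd ℂ) (φ x) := by
  have hτi : IsIntegral ℚ τ := hτ.2.1.tower_top
  have habs : ‖φ (AdjoinSimple.gen ℚ τ)‖ = 1 := by
    rcases salem_root_cases hτ _ (embed_root_tau φ) with h | h | h
    · exfalso; apply hc; rw [h]; simp
    · exfalso; apply hc; rw [h]
      simp [Complex.inv_im]
    · exact h.1
  have key : φ.comp ι.toRingHom = (starRingEnd ℂ).comp φ := by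
    apply hom_ext hτi
    show φ (ι (AdjoinSimple.gen ℚ τ)) = (starRingEnd ℂ) (φ (AdjoinSimple.gen ℚ τ))
    rw [hι, map_inv₀]
    have hmul : φ (AdjoinSimple.gen ℚ τ) * (starRingEnd ℂ) (φ (AdjoinSimple.gen ℚ τ)) = 1 := by
      rw [Complex.mul_conj]
      norm_cast
      rw [Complex.normSq_eq_norm_sq, habs]; norm_num
    exact inv_eq_of_mul_eq_one_left (by rw [mul_comm] at hmul; exact hmul)
  exact DFunLike.congr_fun key x

lemma real_embed_cases (hτ : IsSalem τ) (ι : ℚ⟮τ⟯ →ₐ[ℚ] ℚ⟮τ⟯)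
    (hι : ι (AdjoinSimple.gen ℚ τ) = (AdjoinSimple.gen ℚ τ)⁻¹)
    (φ : ℚ⟮τ⟯ →+* ℂ) (hr : (φ (AdjoinSimple.gen ℚ τ)).im = 0) :
    φ = embR τ ∨ φ = (embR τ).comp ι.toRingHom := by
  have hτi : IsIntegral ℚ τ := hτ.2.1.tower_top
  rcases salem_root_cases hτ _ (embed_root_tau φ) with h | h | h
  · left; apply hom_ext hτi; rw [h]; simp [embR_apply]
  · right; apply hom_ext hτi
    show _ = embR τ (ι (AdjoinSimple.gen ℚ τ))
    rw [h, hι, map_inv₀]; simp [embR_apply]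
  · exact absurd hr h.2

lemma exists_complex_embed (hτ : IsSalem τ) :
    ∃ φ : ℚ⟮τ⟯ →+* ℂ, (φ (AdjoinSimple.gen ℚ τ)).im ≠ 0 := by
  have hτi : IsIntegral ℚ τ := hτ.2.1.tower_top
  by_contra hall
  push_neg at hall
  have hsub : (minpoly ℚ τ).rootSet ℂ ⊆ {(τ : ℂ), ((τ : ℂ))⁻¹} := by
    intro z hz
    have hz' : aeval z (minpoly ℚ τ) = 0 := (mem_rootSet.mp hz).2
    obtain ⟨φ, rfl⟩ := exists_embed_of_root hτi (AdjoinSimple.gen ℚ τ) z hz'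
    rcases salem_root_cases hτ _ (embed_root_tau φ) with h | h | h
    · exact Or.inl h
    · exact Or.inr h
    · exact absurd (hall φ) h.2
  have hle : ((minpoly ℚ τ).rootSet ℂ).ncard ≤ 2 := by
    refine le_trans (Set.ncard_le_ncard hsub ((Set.finite_singleton _).insert _)) ?_
    exact le_trans (Set.ncard_insert_le _ _) (by simp)
  rw [minpoly_rootSet_ncard τ hτi] at hle
  have := hτ.2.2.1
  omega

end iota
section grp

variable {τ : ℝ}

/-- The group of positive "reciprocal units" in `ℚ(τ)`. -/
def SalemGrp (τ : ℝ) (ι : ℚ⟮τ⟯ →ₐ[ℚ] ℚ⟮τ⟯) (g : ℝ) : Prop :=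
  0 < g ∧ ∃ h : g ∈ ℚ⟮τ⟯, IsIntegral ℤ g ∧ IsIntegral ℤ g⁻¹ ∧
    ι ⟨g, h⟩ = (⟨g, h⟩ : ℚ⟮τ⟯)⁻¹

variable {ι : ℚ⟮τ⟯ →ₐ[ℚ] ℚ⟮τ⟯}

lemma SalemGrp.mul {a b : ℝ} (ha : SalemGrp τ ι a) (hb : SalemGrp τ ι b) :
    SalemGrp τ ι (a * b) := by
  obtain ⟨hapos, hamem, hai, hai', haι⟩ := ha
  obtain ⟨hbpos, hbmem, hbi, hbi', hbι⟩ := hb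
  refine ⟨mul_pos hapos hbpos, mul_mem hamem hbmem, hai.mul hbi, ?_, ?_⟩
  · rw [mul_inv]; exact hai'.mul hbi'
  · have h1 : (⟨a * b, mul_mem hamem hbmem⟩ : ℚ⟮τ⟯) = ⟨a, hamem⟩ * ⟨b, hbmem⟩ := rfl
    rw [h1, map_mul, haι, hbι, mul_inv]

lemma SalemGrp.inv {a : ℝ} (ha : SalemGrp τ ι a) : SalemGrp τ ι a⁻¹ := by
  obtain ⟨hapos, hamem, hai, hai', haι⟩ := ha
  refine ⟨inv_pos.mpr hapos, inv_mem hamem, hai', by rwa [inv_inv], ?_⟩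
  have h1 : (⟨a⁻¹, inv_mem hamem⟩ : ℚ⟮τ⟯) = (⟨a, hamem⟩ : ℚ⟮τ⟯)⁻¹ :=
    Subtype.ext (by rw [IntermediateField.coe_inv])
  rw [h1, map_inv₀, haι, inv_inv]

lemma SalemGrp.pow {a : ℝ} (ha : SalemGrp τ ι a) (n : ℕ) (hn : 1 ≤ n) :
    SalemGrp τ ι (a ^ n) := by
  induction n with
  | zero => omega
  | succ m ih =>
    rcases Nat.eq_or_lt_of_le hn with h | h
    · simpa [← h] using ha
    · have hm : 1 ≤ m := by omega
      rw [pow_succ]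
      exact (ih hm).mul ha

end grp
section main_lemmas

variable {τ : ℝ}

/-- Every Salem number of the field belongs to the group. -/
lemma salem_grp_of_salem (hτ : IsSalem τ) (ι : ℚ⟮τ⟯ →ₐ[ℚ] ℚ⟮τ⟯)
    (hι : ι (AdjoinSimple.gen ℚ τ) = (AdjoinSimple.gen ℚ τ)⁻¹)
    (σ : ℝ) (hσ : IsSalem σ) (hmem : σ ∈ ℚ⟮τ⟯) : SalemGrp τ ι σ := by
  have hτi : IsIntegral ℚ τ := hτ.2.1.tower_top
  have hσi : IsIntegral ℚ σ := hσ.2.1.tower_top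
  refine ⟨lt_trans one_pos hσ.1, hmem, hσ.2.1, salem_inv_integral hσ, ?_⟩
  set s : ℚ⟮τ⟯ := ⟨σ, hmem⟩ with hs
  -- `embR τ (ι s)` is a real root of `minpoly ℚ σ`
  have hroot : aeval (embR τ (ι s)) (minpoly ℚ σ) = 0 := by
    have h2 : minpoly ℚ σ = minpoly ℚ s := (minpoly_coe s).symm ▸ rfl
    have h1 : aeval ((embR τ).toRatAlgHom (ι s)) (minpoly ℚ s) = 0 := by
      rw [aeval_algHom_apply, aeval_algHom_apply, minpoly.aeval, map_zero, map_zero]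
    rw [← minpoly_coe s] at h1
    exact h1
  have him : (embR τ (ι s)).im = 0 := by simp [embR_apply]
  rcases salem_root_cases hσ _ hroot with h | h | h
  · -- impossible: ι s = s forces all conjugates of σ to be in {σ, σ⁻¹}
    exfalso
    have hιs : ι s = s := by
      apply Subtype.ext
      have : ((ι s : ℚ⟮τ⟯) : ℝ) = σ := by
        have := congrArg Complex.re h
        simpa [embR_apply] using this
      exact this
    have hsub : (minpoly ℚ σ).rootSet ℂ ⊆ {(σ : ℂ), ((σ : ℂ))⁻¹} := by
      intro z hz
      have hz' : aeval z (minpoly ℚ σ) = 0 := (mem_rootSet.mp hz).2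
      obtain ⟨φ, rfl⟩ := exists_embed_of_root hτi s z hz'
      by_cases himφ : (φ (AdjoinSimple.gen ℚ τ)).im = 0
      · rcases real_embed_cases hτ ι hι φ himφ with rfl | rfl
        · left; simp [embR_apply]; rfl
        · left
          show embR τ (ι s) = _
          rw [hιs]; simp [embR_apply]; rfl
      · have hcc : (starRingEnd ℂ) (φ s) = φ s := by
          rw [← conj_embed hτ ι hι φ himφ s, hιs]
        have hre : (φ s).im = 0 := by
          have := congrArg Complex.im hcc
          simp at this
          linarith
        rcases salem_root_cases hσ (φ s) hz' with h1 | h1 | h1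
        · exact Or.inl h1
        · exact Or.inr h1
        · exact absurd hre h1.2
    have hle : ((minpoly ℚ σ).rootSet ℂ).ncard ≤ 2 := by
      refine le_trans (Set.ncard_le_ncard hsub ((Set.finite_singleton _).insert _)) ?_
      exact le_trans (Set.ncard_insert_le _ _) (by simp)
    rw [minpoly_rootSet_ncard σ hσi] at hle
    have := hσ.2.2.1
    omega
  · -- the good case : ι s = s⁻¹
    apply Subtype.ext
    rw [IntermediateField.coe_inv]
    have : ((ι s : ℚ⟮τ⟯) : ℝ) = σ⁻¹ := by
      have := congrArg Complex.re h
      simpa [embR_apply, Complex.inv_re, Complex.normSq_ofReal] using this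
    simpa using this
  · exact absurd him h.2

end main_lemmas
section main_lemmas2

variable {τ : ℝ}

lemma salem_of_grp (hτ : IsSalem τ) (ι : ℚ⟮τ⟯ →ₐ[ℚ] ℚ⟮τ⟯)
    (hι : ι (AdjoinSimple.gen ℚ τ) = (AdjoinSimple.gen ℚ τ)⁻¹)
    (g : ℝ) (hg : SalemGrp τ ι g) (hg1 : 1 < g) : IsSalem g := by
  have hτi : IsIntegral ℚ τ := hτ.2.1.tower_top
  obtain ⟨hpos, hmem, hi, hi', hgι⟩ := hg
  have hgi : IsIntegral ℚ g := hi.tower_top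
  set s : ℚ⟮τ⟯ := ⟨g, hmem⟩ with hs
  have hsinv : ((s⁻¹ : ℚ⟮τ⟯) : ℝ) = g⁻¹ := by rw [IntermediateField.coe_inv]
  -- `g⁻¹` is a conjugate of `g`
  have hconj : aeval ((g : ℂ))⁻¹ (minpoly ℚ g) = 0 := by
    have h1 := embed_root ((embR τ).comp ι.toRingHom) s
    have h2 : ((embR τ).comp ι.toRingHom) s = ((g : ℂ))⁻¹ := by
      show embR τ (ι s) = _
      rw [hgι]
      simp [embR_apply, hsinv]; rfl
    rwa [h2] at h1
  -- complex embeddings give modulus-one values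
  have habs1 : ∀ φ : ℚ⟮τ⟯ →+* ℂ, (φ (AdjoinSimple.gen ℚ τ)).im ≠ 0 →
      ‖φ s‖ = 1 := by
    intro φ himφ
    have hne : φ s ≠ 0 := by
      rw [_root_.map_ne_zero]
      intro h0
      rw [show (0 : ℚ⟮τ⟯) = ⟨0, zero_mem _⟩ from rfl] at h0
      have := congrArg (fun x : ℚ⟮τ⟯ => (x : ℝ)) h0
      change g = 0 at this
      linarith
    have hcc : (starRingEnd ℂ) (φ s) = (φ s)⁻¹ := by
      rw [← conj_embed hτ ι hι φ himφ s, hgι, map_inv₀]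
    have hmc := Complex.mul_conj (φ s)
    rw [hcc, mul_inv_cancel₀ hne] at hmc
    have : Complex.normSq (φ s) = 1 := by exact_mod_cast hmc.symm
    have h2 : ‖φ s‖ ^ 2 = 1 := by
      rw [← Complex.sq_norm] at this; exact this
    nlinarith [norm_nonneg (φ s)]
  -- real roots of the minimal polynomial of `g` are only `g` and `g⁻¹`
  have hreal : ∀ z : ℂ, aeval z (minpoly ℚ g) = 0 → ‖z‖ = 1 → z.im ≠ 0 := by
    intro z hz habs him0
    have hzre : z = (z.re : ℂ) := Complex.ext rfl (by simp [him0])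
    have habs' : |z.re| = 1 := by rw [hzre] at habs; simpa using habs
    rcases (abs_eq (by norm_num : (0:ℝ) ≤ 1)).mp habs' with h | h
    · have : g = ((1:ℚ):ℝ) := rat_root_eq g hgi 1 (by rw [hzre, h] at hz; simpa using hz)
      simp at this; linarith
    · have : g = ((-1:ℚ):ℝ) := rat_root_eq g hgi (-1) (by rw [hzre, h] at hz; simpa using hz)
      simp at this; linarith
  -- the modulus condition
  have hmod : ∀ z : ℂ, aeval z (minpoly ℚ g) = 0 → z ≠ (g : ℂ) → z ≠ ((g : ℂ))⁻¹ →
      ‖z‖ = 1 := by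
    intro z hz hz1 hz2
    obtain ⟨φ, rfl⟩ := exists_embed_of_root hτi s z hz
    by_cases himφ : (φ (AdjoinSimple.gen ℚ τ)).im = 0
    · rcases real_embed_cases hτ ι hι φ himφ with rfl | rfl
      · exact absurd (by simp [embR_apply]; rfl) hz1
      · refine absurd ?_ hz2
        show embR τ (ι s) = _
        rw [hgι]; simp [embR_apply, hsinv]; rfl
    · exact habs1 φ himφ
  -- degree at least 4
  obtain ⟨φc, hφc⟩ := exists_complex_embed hτ
  set w : ℂ := φc s with hw
  have hwroot : aeval w (minpoly ℚ g) = 0 := embed_root φc s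
  have hwabs : ‖w‖ = 1 := habs1 φc hφc
  have hwim : w.im ≠ 0 := hreal w hwroot hwabs
  have hwcroot : aeval ((starRingEnd ℂ) w) (minpoly ℚ g) = 0 := by
    have h1 : aeval (((starRingEnd ℂ) : ℂ →+* ℂ).toRatAlgHom w) (minpoly ℚ g) = 0 := by
      rw [aeval_algHom_apply, hwroot, map_zero]
    exact h1
  have hd4 : 4 ≤ (minpoly ℚ g).natDegree := by
    have hsub : ({(g:ℂ), ((g:ℂ))⁻¹, w, (starRingEnd ℂ) w} : Set ℂ) ⊆
        (minpoly ℚ g).rootSet ℂ := by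
      have hne0 : minpoly ℚ g ≠ 0 := minpoly.ne_zero hgi
      intro z hz
      rw [mem_rootSet]
      refine ⟨hne0, ?_⟩
      rcases hz with rfl | rfl | rfl | rfl
      · have h1 := embed_root (embR τ) s
        simpa [embR_apply] using h1
      · exact hconj
      · exact hwroot
      · exact hwcroot
    have hg0 : (g:ℂ) ≠ ((g:ℂ))⁻¹ := by
      intro h
      have : (g:ℂ) * (g:ℂ) = 1 := by
        rw [← mul_inv_cancel₀ (a := (g:ℂ)) (by exact_mod_cast (by linarith : g ≠ 0)), ← h]
      have : g * g = 1 := by exact_mod_cast this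
      nlinarith
    have hgw : (g:ℂ) ≠ w := fun h => hwim (by rw [← h]; simp)
    have hgw' : (g:ℂ) ≠ (starRingEnd ℂ) w := fun h => hwim (by
      have := congrArg Complex.im h
      simp at this
      linarith)
    have hginvw : ((g:ℂ))⁻¹ ≠ w := fun h => hwim (by rw [← h]; simp [Complex.inv_im])
    have hginvw' : ((g:ℂ))⁻¹ ≠ (starRingEnd ℂ) w := fun h => hwim (by
      have := congrArg Complex.im h
      simp [Complex.inv_im] at this
      linarith)
    have hwwc : w ≠ (starRingEnd ℂ) w := fun h => hwim (by
      have := congrArg Complex.im h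
      simp at this
      linarith)
    have hcard : ({(g:ℂ), ((g:ℂ))⁻¹, w, (starRingEnd ℂ) w} : Set ℂ).ncard = 4 := by
      rw [Set.ncard_insert_of_notMem (by simp [hg0, hgw, hgw'])
          (((Set.finite_singleton _).insert _).insert _),
        Set.ncard_insert_of_notMem (by simp [hginvw, hginvw'])
          ((Set.finite_singleton _).insert _),
        Set.ncard_insert_of_notMem (by simp [hwwc]) (Set.finite_singleton _),
        Set.ncard_singleton]
    have hle : 4 ≤ ((minpoly ℚ g).rootSet ℂ).ncard := by
      rw [← hcard]
      exact Set.ncard_le_ncard hsub ((minpoly ℚ g).rootSet_finite ℂ)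
    rwa [minpoly_rootSet_ncard g hgi] at hle
  exact ⟨hg1, hi, hd4, hconj, fun z hz h1 h2 => hmod z hz h1 h2⟩

end main_lemmas2
section finiteness

variable {τ : ℝ}

lemma grp_complex_abs (hτ : IsSalem τ) (ι : ℚ⟮τ⟯ →ₐ[ℚ] ℚ⟮τ⟯)
    (hι : ι (AdjoinSimple.gen ℚ τ) = (AdjoinSimple.gen ℚ τ)⁻¹)
    (φ : ℚ⟮τ⟯ →+* ℂ) (himφ : (φ (AdjoinSimple.gen ℚ τ)).im ≠ 0)
    (x : ℚ⟮τ⟯) (hx0 : x ≠ 0) (hxι : ι x = x⁻¹) : ‖φ x‖ = 1 := by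
  have hne : φ x ≠ 0 := by rwa [_root_.map_ne_zero]
  have hcc : (starRingEnd ℂ) (φ x) = (φ x)⁻¹ := by
    rw [← conj_embed hτ ι hι φ himφ x, hxι, map_inv₀]
  have hmc := Complex.mul_conj (φ x)
  rw [hcc, mul_inv_cancel₀ hne] at hmc
  have h1 : Complex.normSq (φ x) = 1 := by exact_mod_cast hmc.symm
  have h2 : ‖φ x‖ ^ 2 = 1 := by rw [← Complex.sq_norm] at h1; exact h1
  nlinarith [norm_nonneg (φ x)]

lemma grp_finite (hτ : IsSalem τ) (ι : ℚ⟮τ⟯ →ₐ[ℚ] ℚ⟮τ⟯)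
    (hι : ι (AdjoinSimple.gen ℚ τ) = (AdjoinSimple.gen ℚ τ)⁻¹) (B : ℝ) :
    {g : ℝ | SalemGrp τ ι g ∧ 1 < g ∧ g ≤ B}.Finite := by
  have hτi : IsIntegral ℚ τ := hτ.2.1.tower_top
  haveI : FiniteDimensional ℚ ℚ⟮τ⟯ := IntermediateField.adjoin.finiteDimensional hτi
  haveI : NumberField ℚ⟮τ⟯ := ⟨⟩
  have hfin := NumberField.Embeddings.finite_of_norm_le ℚ⟮τ⟯ ℂ (max B 1)
  apply Set.Finite.subset (Set.Finite.image (fun x : ℚ⟮τ⟯ => (x : ℝ)) hfin)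
  rintro g ⟨⟨hpos, hmem, hint, hint', hgι⟩, hg1, hgB⟩
  refine ⟨⟨g, hmem⟩, ⟨?_, ?_⟩, rfl⟩
  · have h1 : IsIntegral ℤ (algebraMap ℚ⟮τ⟯ ℝ ⟨g, hmem⟩) := hint
    exact (isIntegral_algebraMap_iff (algebraMap ℚ⟮τ⟯ ℝ).injective).mp h1
  · intro φ
    have hx0 : (⟨g, hmem⟩ : ℚ⟮τ⟯) ≠ 0 := by
      intro h0
      have := congrArg (fun x : ℚ⟮τ⟯ => (x : ℝ)) h0
      simp at this
      linarith
    by_cases himφ : (φ (AdjoinSimple.gen ℚ τ)).im = 0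
    · rcases real_embed_cases hτ ι hι φ himφ with rfl | rfl
      · have : ‖embR τ ⟨g, hmem⟩‖ = g := by
          simp [embR_apply, abs_of_pos hpos]
        rw [this]
        exact le_max_of_le_left hgB
      · have : ‖((embR τ).comp ι.toRingHom) ⟨g, hmem⟩‖ = g⁻¹ := by
          show ‖embR τ (ι ⟨g, hmem⟩)‖ = g⁻¹
          rw [hgι]
          have h2 : ((((⟨g, hmem⟩ : ℚ⟮τ⟯))⁻¹ : ℚ⟮τ⟯) : ℝ) = g⁻¹ := by
            rw [IntermediateField.coe_inv]
          simp [embR_apply, h2, abs_of_pos (inv_pos.mpr hpos)]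
          linarith
        rw [this]
        exact le_max_of_le_right (by rw [inv_le_one₀ hpos]; linarith)
    · rw [grp_complex_abs hτ ι hι φ himφ _ hx0 hgι]
      exact le_max_right _ _

end finiteness
open IntermediateField in
theorem salem_numbers_in_field_are_powers (τ : ℝ) (hτ : IsSalem τ) :
    ∃ τ₁ : ℝ, IsSalem τ₁ ∧ τ₁ ∈ ℚ⟮τ⟯ ∧
      ∀ σ : ℝ, (IsSalem σ ∧ σ ∈ ℚ⟮τ⟯) ↔ ∃ n : ℕ, 1 ≤ n ∧ σ = τ₁ ^ n := by
  have hτi : IsIntegral ℚ τ := hτ.2.1.tower_top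
  obtain ⟨ι, hι⟩ := exists_iota hτi hτ.2.2.2.1
  have hτgrp : SalemGrp τ ι τ :=
    salem_grp_of_salem hτ ι hι τ hτ (mem_adjoin_simple_self ℚ τ)
  have hAfin : {g : ℝ | SalemGrp τ ι g ∧ 1 < g ∧ g ≤ τ}.Finite := grp_finite hτ ι hι τ
  have hAne : {g : ℝ | SalemGrp τ ι g ∧ 1 < g ∧ g ≤ τ}.Nonempty :=
    ⟨τ, hτgrp, hτ.1, le_refl τ⟩
  obtain ⟨g₀, hg₀A, hg₀min⟩ := Set.exists_min_image _ id hAfin hAne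
  obtain ⟨hg₀grp, hg₀1, hg₀τ⟩ := hg₀A
  have hg₀pos : 0 < g₀ := by linarith
  have hmin : ∀ g : ℝ, SalemGrp τ ι g → 1 < g → g₀ ≤ g := by
    intro g hg hg1
    by_cases hgτ : g ≤ τ
    · exact hg₀min g ⟨hg, hg1, hgτ⟩
    · linarith
  have hrep : ∀ N : ℕ, ∀ g : ℝ, SalemGrp τ ι g → 1 < g → g ≤ g₀ ^ N →
      ∃ n : ℕ, 1 ≤ n ∧ g = g₀ ^ n := by
    intro N
    induction N with
    | zero => intro g _ hg1 hle; simp at hle; linarith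
    | succ N ih =>
      intro g hg hg1 hle
      rcases eq_or_lt_of_le (hmin g hg hg1) with h | h
      · exact ⟨1, le_refl 1, by rw [pow_one, ← h]⟩
      · have hq : SalemGrp τ ι (g * g₀⁻¹) := hg.mul hg₀grp.inv
        have hq1 : 1 < g * g₀⁻¹ := by
          rw [← div_eq_mul_inv, lt_div_iff₀ hg₀pos, one_mul]; exact h
        have hqle : g * g₀⁻¹ ≤ g₀ ^ N := by
          rw [pow_succ] at hle
          rw [← div_eq_mul_inv, div_le_iff₀ hg₀pos]
          exact hle
        obtain ⟨n, hn1, hn⟩ := ih _ hq hq1 hqle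
        refine ⟨n + 1, by omega, ?_⟩
        have : g = g₀ ^ n * g₀ := by
          rw [← hn]; field_simp
        rw [this, pow_succ]
  refine ⟨g₀, salem_of_grp hτ ι hι g₀ hg₀grp hg₀1, hg₀grp.2.1, ?_⟩
  intro σ
  constructor
  · rintro ⟨hσ, hσmem⟩
    have hσgrp : SalemGrp τ ι σ := salem_grp_of_salem hτ ι hι σ hσ hσmem
    obtain ⟨N, hN⟩ := pow_unbounded_of_one_lt σ hg₀1
    exact hrep N σ hσgrp hσ.1 hN.le
  · rintro ⟨n, hn1, rfl⟩
    have hgrp : SalemGrp τ ι (g₀ ^ n) := hg₀grp.pow n hn1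
    have h1 : 1 < g₀ ^ n := one_lt_pow₀ hg₀1 (by omega)
    exact ⟨salem_of_grp hτ ι hι _ hgrp h1, hgrp.2.1⟩
end

section
/- For every Salem number τ and every ε > 0 there exists a real number λ > 0 such that the distance ‖λτⁿ‖ from λτⁿ to the nearest integer is less than ε for all positive integers n. -/
open IntermediateField Polynomial

lemma sum_pow_aroots_int (τ : ℝ) (hint : IsIntegral ℤ τ) (N : ℕ) :
    ∃ k : ℤ, (((minpoly ℚ τ).aroots ℂ).map (· ^ N)).sum = (k : ℂ) := by
  classical
  have hτℚ : IsIntegral ℚ τ := hint.tower_top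
  haveI : FiniteDimensional ℚ ℚ⟮τ⟯ := IntermediateField.adjoin.finiteDimensional hτℚ
  set gen := IntermediateField.AdjoinSimple.gen ℚ τ with hgendef
  have hgen : IsIntegral ℤ gen := by
    refine (isIntegral_algebraMap_iff (R := ℤ) (A := ℚ⟮τ⟯) (B := ℝ)
      (algebraMap ℚ⟮τ⟯ ℝ).injective).mp ?_
    rwa [IntermediateField.AdjoinSimple.algebraMap_gen]
  obtain ⟨k, hk⟩ := IsIntegrallyClosed.isIntegral_iff.mp
    (Algebra.isIntegral_trace (R := ℤ) (L := ℚ) (hgen.pow N))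
  refine ⟨k, ?_⟩
  have h1 := trace_eq_sum_embeddings (K := ℚ) (L := ℚ⟮τ⟯) ℂ (x := gen ^ N)
  rw [← hk] at h1
  have hsep : (minpoly ℚ τ).Separable := (minpoly.irreducible hτℚ).separable
  have hnd : ((minpoly ℚ τ).aroots ℂ).Nodup :=
    nodup_roots ((Polynomial.separable_map _).mpr hsep)
  let e := IntermediateField.algHomAdjoinIntegralEquiv ℚ (K := ℂ) hτℚ
  have h2 : ∑ σ : ℚ⟮τ⟯ →ₐ[ℚ] ℂ, σ (gen ^ N)
      = ∑ x : {x // x ∈ (minpoly ℚ τ).aroots ℂ}, (x : ℂ) ^ N := by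
    refine Fintype.sum_equiv e _ _ (fun σ => ?_)
    have h := IntermediateField.algHomAdjoinIntegralEquiv_symm_apply_gen ℚ (K := ℂ) hτℚ (e σ)
    rw [Equiv.symm_apply_apply] at h
    rw [← h]; exact map_pow σ gen N
  have h3 : ∑ x : {x // x ∈ (minpoly ℚ τ).aroots ℂ}, (x : ℂ) ^ N
      = (((minpoly ℚ τ).aroots ℂ).map (· ^ N)).sum := by
    rw [Finset.sum_mem_multiset _ _ (fun y : ℂ => y ^ N) (fun x => rfl),
      Finset.sum_eq_multiset_sum, Multiset.toFinset_val, Multiset.dedup_eq_self.mpr hnd]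
  rw [← h3, ← h2, ← h1]
  simp

/-- The distance from a real number to the nearest integer. -/
noncomputable def distNearestInt (x : ℝ) : ℝ := |x - round x|

theorem salem_powers_near_integers (τ : ℝ) (hτ : IsSalem τ) (ε : ℝ) (hε : 0 < ε) :
    ∃ lam : ℝ, 0 < lam ∧ ∀ n : ℕ, 1 ≤ n → distNearestInt (lam * τ ^ n) < ε := by
  classical
  obtain ⟨hτ1, hint, _hdeg, hconj, habs⟩ := hτ
  have hτ0 : (0:ℝ) < τ := lt_trans one_pos hτ1
  have hτℚ : IsIntegral ℚ τ := hint.tower_top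
  set P : Polynomial ℚ := minpoly ℚ τ with hP
  set R : Multiset ℂ := P.aroots ℂ with hRdef
  have hsep : P.Separable := (minpoly.irreducible hτℚ).separable
  have hnd : R.Nodup := nodup_roots ((Polynomial.separable_map _).mpr hsep)
  have hmemτ : (τ : ℂ) ∈ R := by
    rw [hRdef, Polynomial.mem_aroots]
    refine ⟨minpoly.ne_zero hτℚ, ?_⟩
    have : (τ : ℂ) = algebraMap ℝ ℂ τ := rfl
    rw [this, Polynomial.aeval_algebraMap_apply, minpoly.aeval, map_zero]
  have hmemτ' : ((τ : ℂ))⁻¹ ∈ R := by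
    rw [hRdef, Polynomial.mem_aroots]
    exact ⟨minpoly.ne_zero hτℚ, hconj⟩
  have hne : ((τ : ℂ))⁻¹ ≠ (τ : ℂ) := by
    rw [← Complex.ofReal_inv]
    intro h
    have h2 := Complex.ofReal_injective h
    have h3 : τ⁻¹ < 1 := inv_lt_one_of_one_lt₀ hτ1
    linarith [h2 ▸ h3]
  set S : Multiset ℂ := (R.erase (τ : ℂ)).erase ((τ : ℂ))⁻¹ with hSdef
  have hmem2 : ((τ : ℂ))⁻¹ ∈ R.erase (τ : ℂ) := (Multiset.mem_erase_of_ne hne).mpr hmemτ'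
  have hR : R = (τ : ℂ) ::ₘ ((τ : ℂ))⁻¹ ::ₘ S := by
    rw [hSdef, Multiset.cons_erase hmem2, Multiset.cons_erase hmemτ]
  have hndE : (R.erase (τ : ℂ)).Nodup := hnd.erase _
  have hS1 : ∀ z ∈ S, ‖z‖ = 1 := by
    intro z hz
    have hz2 : z ∈ R.erase (τ : ℂ) := Multiset.mem_of_mem_erase hz
    have hz3 : z ∈ R := Multiset.mem_of_mem_erase hz2
    have hzne1 : z ≠ ((τ : ℂ))⁻¹ := ((Multiset.Nodup.mem_erase_iff hndE).mp hz).1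
    have hzne2 : z ≠ (τ : ℂ) := ((Multiset.Nodup.mem_erase_iff hnd).mp hz2).1
    exact habs z (Polynomial.mem_aroots.mp hz3).2 hzne2 hzne1
  -- choose M such that τ^M is large
  obtain ⟨M, hM⟩ : ∃ M : ℕ, 4 / ε < τ ^ M :=
    ((tendsto_pow_atTop_atTop_of_one_lt hτ1).eventually_gt_atTop _).exists
  -- pigeonhole on the torus
  set δ : ℝ := ε / (2 * (S.card + 1)) with hδdef
  have hδ0 : 0 < δ := by positivity
  set T := S.toFinset with hTdef
  have hfmem : ∀ m : ℕ, (fun z : ↥T => (z : ℂ) ^ m) ∈ Metric.closedBall (0 : ↥T → ℂ) 1 := by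
    intro m
    rw [Metric.mem_closedBall, dist_zero_right]
    refine (pi_norm_le_iff_of_nonneg zero_le_one).mpr fun z => ?_
    have : ‖(z : ℂ)‖ = 1 := hS1 _ (Multiset.mem_toFinset.mp z.2)
    simp [norm_pow, this]
  obtain ⟨x, -, φ, hφ, hconv⟩ :=
    (isCompact_closedBall (0 : ↥T → ℂ) 1).tendsto_subseq hfmem
  obtain ⟨N0, hN0⟩ := Metric.tendsto_atTop.mp hconv (δ / 2) (by positivity)
  set i := max N0 M with hidef
  set m := φ i with hm
  set m' := φ (i + 1) with hm'
  have hmm' : m < m' := hφ (Nat.lt_succ_self i)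
  have hMm : M ≤ m := le_trans (le_max_right _ _) (hφ.id_le i)
  have hdist : dist ((fun z : ↥T => (z : ℂ) ^ m')) (fun z : ↥T => (z : ℂ) ^ m) < δ := by
    have h1 := hN0 i (le_max_left _ _)
    have h2 := hN0 (i + 1) (le_trans (le_max_left _ _) (Nat.le_succ i))
    calc dist ((fun z : ↥T => (z : ℂ) ^ m')) (fun z : ↥T => (z : ℂ) ^ m)
        ≤ dist ((fun z : ↥T => (z : ℂ) ^ m')) x + dist ((fun z : ↥T => (z : ℂ) ^ m)) x :=
          dist_triangle_right _ _ _
      _ < δ / 2 + δ / 2 := add_lt_add h2 h1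
      _ = δ := by ring
  have hzd : ∀ z ∈ S, ‖z ^ m' - z ^ m‖ < δ := by
    intro z hz
    have hzT : z ∈ T := Multiset.mem_toFinset.mpr hz
    calc ‖z ^ m' - z ^ m‖
        = dist ((fun w : ↥T => (w : ℂ) ^ m') ⟨z, hzT⟩) ((fun w : ↥T => (w : ℂ) ^ m) ⟨z, hzT⟩) := by
          rw [Complex.dist_eq]
      _ ≤ dist ((fun w : ↥T => (w : ℂ) ^ m')) (fun w : ↥T => (w : ℂ) ^ m) :=
          dist_le_pi_dist (fun w : ↥T => (w : ℂ) ^ m') (fun w : ↥T => (w : ℂ) ^ m) ⟨z, hzT⟩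
      _ < δ := hdist
  refine ⟨τ ^ m' - τ ^ m, by
    have := pow_lt_pow_right₀ hτ1 hmm'
    linarith, fun n _hn => ?_⟩
  obtain ⟨k₁, hk₁⟩ := sum_pow_aroots_int τ hint (m' + n)
  obtain ⟨k₂, hk₂⟩ := sum_pow_aroots_int τ hint (m + n)
  have hsum : ∀ N : ℕ, (R.map (· ^ N)).sum
      = (τ : ℂ) ^ N + ((τ : ℂ))⁻¹ ^ N + (S.map (· ^ N)).sum := by
    intro N
    rw [hR]
    simp only [Multiset.map_cons, Multiset.sum_cons]
    ring
  have hEq : ((k₁ - k₂ : ℤ) : ℂ) - (((τ ^ m' - τ ^ m) * τ ^ n : ℝ) : ℂ)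
      = (((τ : ℂ))⁻¹ ^ (m' + n) - ((τ : ℂ))⁻¹ ^ (m + n))
        + ((S.map (fun z => z ^ (m' + n) - z ^ (m + n))).sum) := by
    rw [Multiset.sum_map_sub]
    have e1 := hsum (m' + n)
    have e2 := hsum (m + n)
    rw [hk₁] at e1
    rw [hk₂] at e2
    push_cast
    linear_combination e1 - e2
  -- bound for the τ⁻¹ part
  have hpM : 0 < τ ^ M := pow_pos hτ0 M
  have h4 : (τ ^ M)⁻¹ < ε / 4 := by
    refine (inv_lt_comm₀ hpM (by positivity)).mpr ?_
    rwa [inv_div]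
  have habsinv : ‖((τ : ℂ))⁻¹‖ = τ⁻¹ := by
    rw [← Complex.ofReal_inv, Complex.norm_real, Real.norm_eq_abs, abs_of_pos (inv_pos.mpr hτ0)]
  have hinvle : ∀ N : ℕ, M ≤ N → ‖((τ : ℂ))⁻¹ ^ N‖ ≤ (τ ^ M)⁻¹ := by
    intro N hMN
    rw [norm_pow, habsinv, ← inv_pow]
    exact pow_le_pow_of_le_one (by positivity) (inv_le_one_of_one_le₀ hτ1.le) hMN
  have habs1 : ‖((τ : ℂ))⁻¹ ^ (m' + n) - ((τ : ℂ))⁻¹ ^ (m + n)‖ < ε / 2 := by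
    calc ‖((τ : ℂ))⁻¹ ^ (m' + n) - ((τ : ℂ))⁻¹ ^ (m + n)‖
        ≤ ‖((τ : ℂ))⁻¹ ^ (m' + n)‖ + ‖((τ : ℂ))⁻¹ ^ (m + n)‖ :=
          by simpa using
            norm_sub_le (((τ : ℂ))⁻¹ ^ (m' + n)) (((τ : ℂ))⁻¹ ^ (m + n))
      _ ≤ (τ ^ M)⁻¹ + (τ ^ M)⁻¹ := add_le_add
            (hinvle _ (le_trans (le_trans hMm hmm'.le) (Nat.le_add_right _ _)))
            (hinvle _ (le_trans hMm (Nat.le_add_right _ _)))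
      _ < ε / 4 + ε / 4 := add_lt_add h4 h4
      _ = ε / 2 := by ring
  -- bound for the unit circle part
  have habs2 : ‖(S.map (fun z => z ^ (m' + n) - z ^ (m + n))).sum‖ ≤ S.card * δ := by
    refine le_trans (norm_multiset_sum_le _) ?_
    have hb : ∀ w ∈ (Multiset.map (fun x => ‖x‖) (S.map (fun z => z ^ (m' + n) - z ^ (m + n)))),
        w ≤ δ := by
      intro w hw
      rw [Multiset.mem_map] at hw
      obtain ⟨v, hv, rfl⟩ := hw
      rw [Multiset.mem_map] at hv
      obtain ⟨z, hz, rfl⟩ := hv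
      have hfac : z ^ (m' + n) - z ^ (m + n) = (z ^ m' - z ^ m) * z ^ n := by
        rw [pow_add, pow_add, ← sub_mul]
      rw [hfac, norm_mul, norm_pow, hS1 z hz,
        one_pow, mul_one]
      exact (hzd z hz).le
    refine le_trans (Multiset.sum_le_card_nsmul _ δ hb) ?_
    simp only [Multiset.card_map]
    rw [nsmul_eq_mul]
  have hcard : (S.card : ℝ) * δ ≤ ε / 2 := by
    rw [hδdef, mul_div_assoc', div_le_div_iff₀ (by positivity) two_pos]
    nlinarith [Nat.cast_nonneg (α := ℝ) S.card, hε.le]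
  -- conclude
  have hfinal : |( (τ ^ m' - τ ^ m) * τ ^ n : ℝ) - ((k₁ - k₂ : ℤ) : ℝ)| < ε := by
    have heq2 : |((τ ^ m' - τ ^ m) * τ ^ n : ℝ) - ((k₁ - k₂ : ℤ) : ℝ)|
        = ‖((k₁ - k₂ : ℤ) : ℂ) - (((τ ^ m' - τ ^ m) * τ ^ n : ℝ) : ℂ)‖ := by
      rw [show ((k₁ - k₂ : ℤ) : ℂ) - (((τ ^ m' - τ ^ m) * τ ^ n : ℝ) : ℂ)
          = -((( (τ ^ m' - τ ^ m) * τ ^ n - ((k₁ - k₂ : ℤ) : ℝ) : ℝ)) : ℂ) by push_cast; ring,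
        norm_neg, Complex.norm_real, Real.norm_eq_abs]
    rw [heq2, hEq]
    calc ‖(((τ : ℂ))⁻¹ ^ (m' + n) - ((τ : ℂ))⁻¹ ^ (m + n))
            + ((S.map (fun z => z ^ (m' + n) - z ^ (m + n))).sum)‖
        ≤ ‖((τ : ℂ))⁻¹ ^ (m' + n) - ((τ : ℂ))⁻¹ ^ (m + n)‖
            + ‖(S.map (fun z => z ^ (m' + n) - z ^ (m + n))).sum‖ :=
          norm_add_le _ _
      _ < ε / 2 + ε / 2 := add_lt_add_of_lt_of_le habs1 (le_trans habs2 hcard)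
      _ = ε := by ring
  calc distNearestInt ((τ ^ m' - τ ^ m) * τ ^ n)
      ≤ |((τ ^ m' - τ ^ m) * τ ^ n : ℝ) - ((k₁ - k₂ : ℤ) : ℝ)| := round_le _ _
    _ < ε := hfinal
end

section
/- For each ε > 0, the set of real numbers α > 1 such that ‖αⁿ‖ < ε for all integers n ≥ 0 is uncountable. -/
/-- Nested interval construction: stage `n` is an interval `[l, r]` with
`l ^ (n+1)` an integer and `r ^ (n+1) = l ^ (n+1) + δ`.  The bit `b n` selects
one of two possible integers at the next stage. -/
noncomputable def pisotSeq (δ : ℝ) (A : ℤ) (b : ℕ → Bool) : ℕ → ℝ × ℝ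
  | 0 => ((A : ℝ), (A : ℝ) + δ)
  | n + 1 =>
    let p := pisotSeq δ A b n
    let c : ℝ := ((⌈p.1 ^ (n + 2)⌉ + (if b n then 1 else 0) : ℤ) : ℝ)
    (c ^ ((n + 2 : ℕ) : ℝ)⁻¹, (c + δ) ^ ((n + 2 : ℕ) : ℝ)⁻¹)

/-- The invariant maintained at each stage. -/
def pisotInv (δ : ℝ) (A : ℤ) (b : ℕ → Bool) (n : ℕ) : Prop :=
  3 / δ ≤ (pisotSeq δ A b n).1 ∧ (pisotSeq δ A b n).1 ≤ (pisotSeq δ A b n).2 ∧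
    ∃ c : ℤ, (pisotSeq δ A b n).1 ^ (n + 1) = (c : ℝ) ∧
      (pisotSeq δ A b n).2 ^ (n + 1) = (c : ℝ) + δ

lemma pisotSeq_succ_def (δ : ℝ) (A : ℤ) (b : ℕ → Bool) (n : ℕ) :
    pisotSeq δ A b (n + 1) =
      ((((⌈(pisotSeq δ A b n).1 ^ (n + 2)⌉ + (if b n then 1 else 0) : ℤ) : ℝ)) ^
          ((n + 2 : ℕ) : ℝ)⁻¹,
        (((⌈(pisotSeq δ A b n).1 ^ (n + 2)⌉ + (if b n then 1 else 0) : ℤ) : ℝ) + δ) ^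
          ((n + 2 : ℕ) : ℝ)⁻¹) := by
  rw [pisotSeq]

lemma pisotSeq_step (δ : ℝ) (hδ0 : 0 < δ) (hδ1 : δ ≤ 1) (A : ℤ) (b : ℕ → Bool) (n : ℕ)
    (h : pisotInv δ A b n) :
    pisotInv δ A b (n + 1) ∧ (pisotSeq δ A b n).1 ≤ (pisotSeq δ A b (n + 1)).1 ∧
      (pisotSeq δ A b (n + 1)).2 ≤ (pisotSeq δ A b n).2 := by
  obtain ⟨hMl, hlr, c, hc1, hc2⟩ := h
  set l := (pisotSeq δ A b n).1 with hl
  set r := (pisotSeq δ A b n).2 with hr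
  have hl0 : 0 < l := lt_of_lt_of_le (by positivity) hMl
  have hr0 : 0 < r := lt_of_lt_of_le hl0 hlr
  set cI : ℤ := ⌈l ^ (n + 2)⌉ + (if b n then 1 else 0) with hcI
  have hb0 : (0 : ℝ) ≤ ((if b n then 1 else 0 : ℤ) : ℝ) := by split <;> norm_num
  have hb1 : ((if b n then 1 else 0 : ℤ) : ℝ) ≤ 1 := by split <;> norm_num
  have hLc : l ^ (n + 2) ≤ (cI : ℝ) := by
    have h1 : (l ^ (n + 2) : ℝ) ≤ (⌈l ^ (n + 2)⌉ : ℝ) := Int.le_ceil _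
    rw [hcI]; push_cast; split <;> linarith
  have hcub : (cI : ℝ) ≤ l ^ (n + 2) + 2 := by
    have h1 : (⌈l ^ (n + 2)⌉ : ℝ) < l ^ (n + 2) + 1 := Int.ceil_lt_add_one _
    rw [hcI]; push_cast; split <;> linarith
  have hgrow : l ^ (n + 2) + l * δ ≤ r ^ (n + 2) := by
    have h3 : l * r ^ (n + 1) ≤ r * r ^ (n + 1) :=
      mul_le_mul_of_nonneg_right hlr (by positivity)
    calc l ^ (n + 2) + l * δ = l * l ^ (n + 1) + l * δ := by ring
      _ = l * ((c : ℝ) + δ) := by rw [hc1]; ring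
      _ = l * r ^ (n + 1) := by rw [hc2]
      _ ≤ r * r ^ (n + 1) := h3
      _ = r ^ (n + 2) := by ring
  have h3δ : 3 ≤ l * δ := by
    rw [div_le_iff₀ hδ0] at hMl; linarith
  have hcRle : (cI : ℝ) + δ ≤ r ^ (n + 2) := by linarith
  have hcI0 : (0 : ℝ) ≤ (cI : ℝ) := le_trans (by positivity) hLc
  have hm : (n + 2 : ℕ) ≠ 0 := by omega
  have hl'pow : ((cI : ℝ) ^ ((n + 2 : ℕ) : ℝ)⁻¹) ^ (n + 2) = (cI : ℝ) :=
    Real.rpow_inv_natCast_pow hcI0 hm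
  have hr'pow : (((cI : ℝ) + δ) ^ ((n + 2 : ℕ) : ℝ)⁻¹) ^ (n + 2) = (cI : ℝ) + δ :=
    Real.rpow_inv_natCast_pow (by linarith) hm
  have hll' : l ≤ (cI : ℝ) ^ ((n + 2 : ℕ) : ℝ)⁻¹ := by
    have he : l = (l ^ (n + 2)) ^ ((n + 2 : ℕ) : ℝ)⁻¹ :=
      (Real.pow_rpow_inv_natCast hl0.le hm).symm
    rw [he]
    exact Real.rpow_le_rpow (by positivity) hLc (by positivity)
  have hr'r : ((cI : ℝ) + δ) ^ ((n + 2 : ℕ) : ℝ)⁻¹ ≤ r := by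
    have he : r = (r ^ (n + 2)) ^ ((n + 2 : ℕ) : ℝ)⁻¹ :=
      (Real.pow_rpow_inv_natCast hr0.le hm).symm
    conv_rhs => rw [he]
    exact Real.rpow_le_rpow (by linarith) hcRle (by positivity)
  have hl'r' : (cI : ℝ) ^ ((n + 2 : ℕ) : ℝ)⁻¹ ≤ ((cI : ℝ) + δ) ^ ((n + 2 : ℕ) : ℝ)⁻¹ :=
    Real.rpow_le_rpow hcI0 (by linarith) (by positivity)
  have hseq := pisotSeq_succ_def δ A b n
  rw [← hl, ← hcI] at hseq
  have hfst : (pisotSeq δ A b (n + 1)).1 = (cI : ℝ) ^ ((n + 2 : ℕ) : ℝ)⁻¹ := by rw [hseq]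
  have hsnd : (pisotSeq δ A b (n + 1)).2 = ((cI : ℝ) + δ) ^ ((n + 2 : ℕ) : ℝ)⁻¹ := by rw [hseq]
  have he2 : n + 1 + 1 = n + 2 := rfl
  refine ⟨⟨?_, ?_, cI, ?_, ?_⟩, ?_, ?_⟩
  · rw [hfst]; exact le_trans hMl hll'
  · rw [hfst, hsnd]; exact hl'r'
  · rw [hfst, he2]; exact hl'pow
  · rw [hsnd, he2]; exact hr'pow
  · rw [hfst]; exact hll'
  · rw [hsnd]; exact hr'r

lemma pisotSeq_congr (δ : ℝ) (A : ℤ) (b b' : ℕ → Bool) (n : ℕ)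
    (h : ∀ k < n, b k = b' k) : pisotSeq δ A b n = pisotSeq δ A b' n := by
  induction n with
  | zero => rfl
  | succ n ih =>
    have h1 : pisotSeq δ A b n = pisotSeq δ A b' n :=
      ih fun k hk => h k (hk.trans (Nat.lt_succ_self n))
    rw [pisotSeq_succ_def, pisotSeq_succ_def, h1, h n (Nat.lt_succ_self n)]

theorem uncountably_many_powers_near_integers (ε : ℝ) (hε : 0 < ε) :
    ¬ {α : ℝ | 1 < α ∧ ∀ n : ℕ, distNearestInt (α ^ n) < ε}.Countable := by
  intro hS
  classical
  set S := {α : ℝ | 1 < α ∧ ∀ n : ℕ, distNearestInt (α ^ n) < ε} with hSdef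
  set δ : ℝ := min ε 1 / 2 with hδdef
  have hmin : 0 < min ε 1 := lt_min hε one_pos
  have hδ0 : 0 < δ := by rw [hδdef]; linarith
  have hδ1 : δ ≤ 1 / 2 := by
    have := min_le_right ε 1; rw [hδdef]; linarith
  have hδε : δ < ε := by
    have := min_le_left ε 1; rw [hδdef]; linarith
  set A : ℤ := ⌈(3 : ℝ) / δ⌉ with hA
  have hA3 : 3 / δ ≤ (A : ℝ) := Int.le_ceil _
  have hInv : ∀ b n, pisotInv δ A b n := by
    intro b n
    induction n with
    | zero =>
      refine ⟨hA3, le_add_of_nonneg_right hδ0.le, A, ?_, ?_⟩ <;>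
        simp [pisotSeq]
    | succ n ih => exact (pisotSeq_step δ hδ0 (by linarith) A b n ih).1
  have hmono : ∀ b, Monotone fun n => (pisotSeq δ A b n).1 := fun b =>
    monotone_nat_of_le_succ fun n => (pisotSeq_step δ hδ0 (by linarith) A b n (hInv b n)).2.1
  have hanti : ∀ b, Antitone fun n => (pisotSeq δ A b n).2 := fun b =>
    antitone_nat_of_succ_le fun n => (pisotSeq_step δ hδ0 (by linarith) A b n (hInv b n)).2.2
  have hlr : ∀ b n, (pisotSeq δ A b n).1 ≤ (pisotSeq δ A b n).2 := fun b n => (hInv b n).2.1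
  have hkey : ∀ b k n, (pisotSeq δ A b k).1 ≤ (pisotSeq δ A b n).2 := by
    intro b k n
    rcases le_total k n with h | h
    · exact le_trans (hmono b h) (hlr b n)
    · exact le_trans (hlr b k) (hanti b h)
  set α : (ℕ → Bool) → ℝ := fun b => ⨆ n, (pisotSeq δ A b n).1 with hαdef
  have hbdd : ∀ b, BddAbove (Set.range fun n => (pisotSeq δ A b n).1) := fun b =>
    ⟨(pisotSeq δ A b 0).2, by rintro x ⟨k, rfl⟩; exact hkey b k 0⟩
  have hlα : ∀ b n, (pisotSeq δ A b n).1 ≤ α b := fun b n => le_ciSup (hbdd b) n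
  have hαr : ∀ b n, α b ≤ (pisotSeq δ A b n).2 := fun b n => ciSup_le fun k => hkey b k n
  have hl0 : ∀ b n, 0 < (pisotSeq δ A b n).1 := fun b n =>
    lt_of_lt_of_le (by positivity) (hInv b n).1
  have hα0 : ∀ b, 0 < α b := fun b => lt_of_lt_of_le (hl0 b 0) (hlα b 0)
  -- the constructed reals belong to S
  have hmem : ∀ b, α b ∈ S := by
    intro b
    have h33 : (3 : ℝ) ≤ 3 / δ := by rw [le_div_iff₀ hδ0]; nlinarith
    have h00 : (pisotSeq δ A b 0).1 = (A : ℝ) := rfl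
    constructor
    · have h1 := hlα b 0
      rw [h00] at h1
      linarith
    · intro n
      cases n with
      | zero =>
        simp only [pow_zero, distNearestInt, round_one, Int.cast_one, sub_self, abs_zero]
        exact hε
      | succ k =>
        obtain ⟨_, _, c, hc1, hc2⟩ := hInv b k
        have h1 : (c : ℝ) ≤ α b ^ (k + 1) := by
          have := pow_le_pow_left₀ (hl0 b k).le (hlα b k) (k + 1)
          rwa [hc1] at this
        have h2 : α b ^ (k + 1) ≤ (c : ℝ) + δ := by
          have := pow_le_pow_left₀ (hα0 b).le (hαr b k) (k + 1)
          rwa [hc2] at this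
        simp only [distNearestInt]
        calc |α b ^ (k + 1) - round (α b ^ (k + 1))| ≤ |α b ^ (k + 1) - (c : ℝ)| :=
              round_le _ c
          _ ≤ δ := by rw [abs_le]; constructor <;> linarith
          _ < ε := hδε
  -- injectivity
  have hinj : Function.Injective α := by
    intro b b' hbb'
    by_contra hne
    have hex : ∃ k, b k ≠ b' k := by
      by_contra h; push_neg at h; exact hne (funext h)
    set n := Nat.find hex with hn'
    have hn : b n ≠ b' n := Nat.find_spec hex
    have hlt : ∀ k < n, b k = b' k := fun k hk => by
      have := Nat.find_min hex hk; tauto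
    have hsame : pisotSeq δ A b n = pisotSeq δ A b' n := pisotSeq_congr δ A b b' n hlt
    -- power identities at stage n+1
    have key : ∀ (b₀ : ℕ → Bool),
        (pisotSeq δ A b₀ (n + 1)).1 ^ (n + 2) =
          ((⌈(pisotSeq δ A b₀ n).1 ^ (n + 2)⌉ + (if b₀ n then 1 else 0) : ℤ) : ℝ) ∧
        (pisotSeq δ A b₀ (n + 1)).2 ^ (n + 2) =
          ((⌈(pisotSeq δ A b₀ n).1 ^ (n + 2)⌉ + (if b₀ n then 1 else 0) : ℤ) : ℝ) + δ := by
      intro b₀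
      have hl0' := hl0 b₀ n
      set L : ℝ := (pisotSeq δ A b₀ n).1 ^ (n + 2) with hL
      have hL0 : 0 ≤ L := by positivity
      have hb0 : (0 : ℝ) ≤ ((if b₀ n then 1 else 0 : ℤ) : ℝ) := by split <;> norm_num
      have hLc : L ≤ ((⌈L⌉ + (if b₀ n then 1 else 0) : ℤ) : ℝ) := by
        have h1 : (L : ℝ) ≤ (⌈L⌉ : ℝ) := Int.le_ceil _
        push_cast; push_cast at hb0; linarith
      have hc0 : (0 : ℝ) ≤ ((⌈L⌉ + (if b₀ n then 1 else 0) : ℤ) : ℝ) := le_trans hL0 hLc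
      have hm : (n + 2 : ℕ) ≠ 0 := by omega
      rw [pisotSeq_succ_def, ← hL]
      exact ⟨Real.rpow_inv_natCast_pow hc0 hm, Real.rpow_inv_natCast_pow (by linarith) hm⟩
    obtain ⟨kb1, kb2⟩ := key b
    obtain ⟨kb'1, kb'2⟩ := key b'
    rw [hsame] at kb1 kb2
    set C : ℤ := ⌈(pisotSeq δ A b' n).1 ^ (n + 2)⌉ with hC
    set x : ℝ := α b with hx
    have hx' : x = α b' := hbb'
    have hxb1 : ((C + (if b n then 1 else 0) : ℤ) : ℝ) ≤ x ^ (n + 2) := by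
      have := pow_le_pow_left₀ (hl0 b (n + 1)).le (hlα b (n + 1)) (n + 2)
      rwa [kb1] at this
    have hxb2 : x ^ (n + 2) ≤ ((C + (if b n then 1 else 0) : ℤ) : ℝ) + δ := by
      have := pow_le_pow_left₀ (hα0 b).le (hαr b (n + 1)) (n + 2)
      rwa [kb2] at this
    have hxb'1 : ((C + (if b' n then 1 else 0) : ℤ) : ℝ) ≤ x ^ (n + 2) := by
      have := pow_le_pow_left₀ (hl0 b' (n + 1)).le (hlα b' (n + 1)) (n + 2)
      rw [kb'1] at this; rwa [hx', hαdef]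
    have hxb'2 : x ^ (n + 2) ≤ ((C + (if b' n then 1 else 0) : ℤ) : ℝ) + δ := by
      have h0 := hα0 b'
      have := pow_le_pow_left₀ (hα0 b').le (hαr b' (n + 1)) (n + 2)
      rw [kb'2] at this; rwa [hx', hαdef]
    have : (1 : ℝ) ≤ δ := by
      rcases Bool.eq_false_or_eq_true (b n) with h | h <;>
        rcases Bool.eq_false_or_eq_true (b' n) with h' | h' <;>
          simp [h, h'] at hn hxb1 hxb2 hxb'1 hxb'2 ⊢ <;>
          push_cast at hxb1 hxb2 hxb'1 hxb'2 <;> linarith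
    linarith
  -- Cantor diagonal contradiction
  have hcnt : Countable S := hS.to_subtype
  obtain ⟨e⟩ := countable_iff_nonempty_embedding.mp hcnt
  set B : Set ℕ → (ℕ → Bool) := fun s n => decide (n ∈ s) with hB
  have hBinj : Function.Injective B := by
    intro s t hst
    ext n
    have h1 := congrFun hst n
    simp only [hB] at h1
    exact decide_eq_decide.mp h1
  have : Function.Injective fun s : Set ℕ => e ⟨α (B s), hmem (B s)⟩ := by
    intro s t h
    have h1 := e.injective h
    have h2 : α (B s) = α (B t) := congrArg Subtype.val h1
    exact hBinj (hinj h2)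
  exact Function.cantor_injective _ this
end

section
/- The polynomial L(z) = z¹⁰ + z⁹ − z⁷ − z⁶ − z⁵ − z⁴ − z³ + z + 1 is irreducible over ℚ, has exactly one real root τ₁₀ greater than 1, this root satisfies 1.17 < τ₁₀ < 1.18, and τ₁₀ is a Salem number of degree 10. -/
open Polynomial in
/-- Lehmer's polynomial. -/
noncomputable def lehmerPoly : Polynomial ℚ :=
  X ^ 10 + X ^ 9 - X ^ 7 - X ^ 6 - X ^ 5 - X ^ 4 - X ^ 3 + X + 1

section LehmerAux

open Polynomial

noncomputable def lehmerZ : Polynomial ℤ :=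
  X ^ 10 + X ^ 9 - X ^ 7 - X ^ 6 - X ^ 5 - X ^ 4 - X ^ 3 + X + 1

lemma lehmerZ_map : lehmerZ.map (Int.castRingHom ℚ) = lehmerPoly := by
  simp [lehmerZ, lehmerPoly]

lemma aeval_lehmer {A : Type*} [CommRing A] [Algebra ℚ A] (x : A) :
    aeval x lehmerPoly = x^10 + x^9 - x^7 - x^6 - x^5 - x^4 - x^3 + x + 1 := by
  simp [lehmerPoly]

lemma lehmer_monic : lehmerPoly.Monic := by
  unfold lehmerPoly
  monicity!

lemma lehmerZ_monic : lehmerZ.Monic := by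
  unfold lehmerZ
  monicity!

lemma lehmer_natDegree : lehmerPoly.natDegree = 10 := by
  unfold lehmerPoly
  compute_degree!

lemma lehmerZ_eval_two : lehmerZ.eval 2 = 1291 := by
  simp [lehmerZ]


lemma totient_div {d : ℕ} (hd : 0 < d) (h : d.totient ≤ 10) : d ∣ 55440 := by
  have hN : (55440:ℕ) ≠ 0 := by norm_num
  rw [← Nat.factorization_le_iff_dvd hd.ne' hN]
  intro p
  set k := d.factorization p with hk
  rcases Nat.eq_zero_or_pos k with h0 | hkpos
  · simp [h0]
  have hp : p.Prime := Nat.prime_of_mem_primeFactors (by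
    rw [← Nat.support_factorization]
    exact Finsupp.mem_support_iff.mpr hkpos.ne')
  have hpk : p ^ k ∣ d := Nat.ordProj_dvd d p
  have htot : (p ^ k).totient ∣ d.totient := Nat.totient_dvd_of_dvd hpk
  have hle : (p ^ k).totient ≤ 10 :=
    le_trans (Nat.le_of_dvd (Nat.totient_pos.mpr hd) htot) h
  rw [Nat.totient_prime_pow hp hkpos] at hle
  have hple : p - 1 ≤ 10 := le_trans (Nat.le_mul_of_pos_left _ (by exact pow_pos hp.pos _)) hle
  have hp2 := hp.two_le
  have hp11 : p ≤ 11 := by omega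
  rw [← Nat.Prime.pow_dvd_iff_le_factorization hp hN]
  interval_cases p
  · -- p = 2
    have hk4 : k ≤ 4 := by
      by_contra hc
      have : 2^4 ≤ 2^(k-1) := Nat.pow_le_pow_right (by norm_num) (by omega)
      omega
    exact dvd_trans (pow_dvd_pow 2 hk4) (by norm_num)
  · -- p = 3
    have hk2 : k ≤ 2 := by
      by_contra hc
      have : 3^2 ≤ 3^(k-1) := Nat.pow_le_pow_right (by norm_num) (by omega)
      omega
    exact dvd_trans (pow_dvd_pow 3 hk2) (by norm_num)
  · exact absurd hp (by norm_num)
  · -- p = 5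
    have hk1 : k ≤ 1 := by
      by_contra hc
      have : 5^1 ≤ 5^(k-1) := Nat.pow_le_pow_right (by norm_num) (by omega)
      omega
    exact dvd_trans (pow_dvd_pow 5 hk1) (by norm_num)
  · exact absurd hp (by norm_num)
  · -- p = 7
    have hk1 : k ≤ 1 := by
      by_contra hc
      have : 7^1 ≤ 7^(k-1) := Nat.pow_le_pow_right (by norm_num) (by omega)
      omega
    exact dvd_trans (pow_dvd_pow 7 hk1) (by norm_num)
  · exact absurd hp (by norm_num)
  · exact absurd hp (by norm_num)
  · exact absurd hp (by norm_num)
  · -- p = 11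
    have hk1 : k ≤ 1 := by
      by_contra hc
      have : 11^1 ≤ 11^(k-1) := Nat.pow_le_pow_right (by norm_num) (by omega)
      omega
    exact dvd_trans (pow_dvd_pow 11 hk1) (by norm_num)

set_option exponentiation.threshold 60000 in
lemma pow_mod_big : 2^55440 % 1291 = 1238 := by norm_num
lemma not_dvd_big : ¬ ((1291:ℕ) ∣ 2^55440 - 1) := by
  have h1 : 1 ≤ 2^55440 := Nat.one_le_two_pow
  have h2 := pow_mod_big
  omega

lemma pow_eq_one_of_conj_abs_one {z : ℂ} (hz : IsIntegral ℤ z)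
    (habs : ∀ w : ℂ, aeval w (minpoly ℚ z) = 0 → ‖w‖ = 1) :
    ∃ n : ℕ, 0 < n ∧ z ^ n = 1 := by
  have hzQ : IsIntegral ℚ z := hz.tower_top
  let K := IntermediateField.adjoin ℚ ({z} : Set ℂ)
  haveI : FiniteDimensional ℚ K := IntermediateField.adjoin.finiteDimensional hzQ
  haveI : NumberField K := ⟨⟩
  let x : K := IntermediateField.AdjoinSimple.gen ℚ z
  have hgen : algebraMap K ℂ x = z := IntermediateField.AdjoinSimple.algebraMap_gen ℚ z
  have hinj : Function.Injective (algebraMap K ℂ) := (algebraMap K ℂ).injective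
  have hxi : IsIntegral ℤ x := by
    rw [← isIntegral_algebraMap_iff hinj, hgen]; exact hz
  have hmp : minpoly ℚ x = minpoly ℚ z := by
    rw [← hgen, minpoly.algebraMap_eq hinj]
  have hx : ∀ φ : K →+* ℂ, ‖φ x‖ = 1 := by
    intro φ
    have : aeval (φ.toRatAlgHom x) (minpoly ℚ x) = 0 := by
      rw [Polynomial.aeval_algHom_apply, minpoly.aeval, map_zero]
    rw [hmp] at this
    exact habs _ this
  obtain ⟨n, hn, hxn⟩ := NumberField.Embeddings.pow_eq_one_of_norm_eq_one K ℂ hxi hx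
  exact ⟨n, hn, by rw [← hgen, ← map_pow, hxn, map_one]⟩

lemma not_root_of_unity {z : ℂ} {n : ℕ} (hn : 0 < n) (hzn : z ^ n = 1)
    (hdvd : minpoly ℚ z ∣ lehmerPoly) : False := by
  have hzL : aeval z lehmerPoly = 0 := by
    obtain ⟨c, hc⟩ := hdvd
    rw [hc, map_mul, minpoly.aeval, zero_mul]
  have ho : IsOfFinOrder z := isOfFinOrder_iff_pow_eq_one.mpr ⟨n, hn, hzn⟩
  have hd : 0 < orderOf z := ho.orderOf_pos
  have hprim : IsPrimitiveRoot z (orderOf z) := IsPrimitiveRoot.orderOf z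
  rcases eq_or_lt_of_le (show 1 ≤ orderOf z from hd) with h1 | hd2
  · -- orderOf z = 1, z = 1
    have hz1 : z = 1 := orderOf_eq_one_iff.mp h1.symm
    rw [hz1, aeval_lehmer] at hzL
    norm_num at hzL
  · set d := orderOf z with hdd
    have hd2' : 2 ≤ d := hd2
    have hcyc : cyclotomic d ℚ = minpoly ℚ z := cyclotomic_eq_minpoly_rat hprim hd
    rw [← hcyc] at hdvd
    have hLne : lehmerPoly ≠ 0 := lehmer_monic.ne_zero
    have htot : d.totient ≤ 10 := by
      have := Polynomial.natDegree_le_of_dvd hdvd hLne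
      rwa [natDegree_cyclotomic, lehmer_natDegree] at this
    have hZ : cyclotomic d ℤ ∣ lehmerZ := by
      rw [← Polynomial.map_dvd_map (Int.castRingHom ℚ) Int.cast_injective
        (cyclotomic.monic d ℤ), map_cyclotomic, lehmerZ_map]
      exact hdvd
    have heval : (cyclotomic d ℤ).eval 2 ∣ 1291 := by
      rw [← lehmerZ_eval_two]
      exact Polynomial.eval_dvd hZ
    have ha1 : 1 < ((cyclotomic d ℤ).eval 2).natAbs := by
      have := Polynomial.sub_one_lt_natAbs_cyclotomic_eval hd2' (by norm_num : (2:ℕ) ≠ 1)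
      simpa using this
    have hdvd1291 : ((cyclotomic d ℤ).eval 2).natAbs ∣ 1291 := by
      have := Int.natAbs_dvd_natAbs.mpr heval
      simpa using this
    have hprime : Nat.Prime 1291 := by norm_num
    have ha : ((cyclotomic d ℤ).eval 2).natAbs = 1291 := by
      rcases (hprime.eq_one_or_self_of_dvd _ hdvd1291) with h | h
      · omega
      · exact h
    have hXd : (cyclotomic d ℤ).eval 2 ∣ (2:ℤ)^d - 1 := by
      have h := Polynomial.eval_dvd (x := (2:ℤ)) (cyclotomic.dvd_X_pow_sub_one (R := ℤ) (n := d))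
      simpa using h
    have h1291d : (1291:ℤ) ∣ (2:ℤ)^d - 1 := by
      have := Int.natAbs_dvd.mpr hXd
      rwa [ha] at this
    obtain ⟨m, hm⟩ := totient_div hd htot
    have hbig : (1291:ℤ) ∣ (2:ℤ)^55440 - 1 := by
      refine h1291d.trans ?_
      have : ((2:ℤ)^d - 1) ∣ ((2:ℤ)^d)^m - 1^m := sub_dvd_pow_sub_pow _ _ m
      simpa [← pow_mul, ← hm] using this
    apply not_dvd_big
    have h1 : 1 ≤ (2:ℕ)^55440 := Nat.one_le_two_pow
    have : ((1291:ℤ)) ∣ ((2^55440 - 1 : ℕ) : ℤ) := by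
      push_cast [h1]
      exact hbig
    exact_mod_cast this

noncomputable def quinticP : Polynomial ℝ :=
  X ^ 5 + X ^ 4 - C 5 * X ^ 3 - C 5 * X ^ 2 + C 4 * X + C 3

lemma quintic_roots :
    ∃ x1 x2 x3 x4 x5 : ℝ,
      (-2 < x1 ∧ x1 < -17/10) ∧ (-17/10 < x2 ∧ x2 < -1) ∧ (-1 < x3 ∧ x3 < 0) ∧
      (0 < x4 ∧ x4 < 2) ∧ (2 < x5 ∧ x5 < 21/10) ∧
      (∀ w : ℂ, w^5 + w^4 - 5*w^3 - 5*w^2 + 4*w + 3 = 0 →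
        w = x1 ∨ w = x2 ∨ w = x3 ∨ w = x4 ∨ w = x5) := by
  set f : ℝ → ℝ := fun x => x^5 + x^4 - 5*x^3 - 5*x^2 + 4*x + 3 with hf
  have hc : Continuous f := by fun_prop
  have ivt : ∀ a b : ℝ, a ≤ b → f a < 0 → 0 < f b → ∃ x, x ∈ Set.Ioo a b ∧ f x = 0 := by
    intro a b hab ha hb
    have := intermediate_value_Ioo hab (hc.continuousOn)
    obtain ⟨x, hx, hfx⟩ := this (Set.mem_Ioo.mpr ⟨ha, hb⟩)
    exact ⟨x, hx, hfx⟩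
  have ivt' : ∀ a b : ℝ, a ≤ b → 0 < f a → f b < 0 → ∃ x, x ∈ Set.Ioo a b ∧ f x = 0 := by
    intro a b hab ha hb
    have := intermediate_value_Ioo' hab (hc.continuousOn)
    obtain ⟨x, hx, hfx⟩ := this (Set.mem_Ioo.mpr ⟨hb, ha⟩)
    exact ⟨x, hx, hfx⟩
  obtain ⟨x1, hx1, hfx1⟩ := ivt (-2) (-17/10) (by norm_num) (by norm_num [hf]) (by norm_num [hf])
  obtain ⟨x2, hx2, hfx2⟩ := ivt' (-17/10) (-1) (by norm_num) (by norm_num [hf]) (by norm_num [hf])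
  obtain ⟨x3, hx3, hfx3⟩ := ivt (-1) 0 (by norm_num) (by norm_num [hf]) (by norm_num [hf])
  obtain ⟨x4, hx4, hfx4⟩ := ivt' 0 2 (by norm_num) (by norm_num [hf]) (by norm_num [hf])
  obtain ⟨x5, hx5, hfx5⟩ := ivt 2 (21/10) (by norm_num) (by norm_num [hf]) (by norm_num [hf])
  obtain ⟨h11, h12⟩ := hx1; obtain ⟨h21, h22⟩ := hx2; obtain ⟨h31, h32⟩ := hx3
  obtain ⟨h41, h42⟩ := hx4; obtain ⟨h51, h52⟩ := hx5
  refine ⟨x1, x2, x3, x4, x5, ⟨h11, h12⟩, ⟨h21, h22⟩, ⟨h31, h32⟩, ⟨h41, h42⟩, ⟨h51, h52⟩, ?_⟩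
  -- polynomial facts
  have hmonic : quinticP.Monic := by unfold quinticP; monicity!
  have hdeg : quinticP.natDegree = 5 := by unfold quinticP; compute_degree!
  have hev : ∀ x : ℝ, quinticP.eval x = f x := by
    intro x; simp [quinticP, hf]
  have hroot : ∀ x : ℝ, f x = 0 → x ∈ quinticP.roots := by
    intro x hx
    exact (mem_roots hmonic.ne_zero).mpr (by rw [IsRoot, hev, hx])
  have hlt : x1 < x2 ∧ x2 < x3 ∧ x3 < x4 ∧ x4 < x5 := by
    refine ⟨by linarith, by linarith, by linarith, by linarith⟩
  set s : Multiset ℝ := {x1, x2, x3, x4, x5} with hs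
  have hnodup : s.Nodup := by
    simp only [hs, Multiset.insert_eq_cons, Multiset.nodup_cons, Multiset.mem_cons,
      Multiset.mem_singleton, Multiset.nodup_singleton, not_or, and_true]
    refine ⟨⟨?_, ?_, ?_, ?_⟩, ⟨?_, ?_, ?_⟩, ⟨?_, ?_⟩, ?_⟩ <;> (intro h; subst h; linarith)
  have hsub : s ≤ quinticP.roots := (Multiset.le_iff_subset hnodup).mpr (by
    intro x hx
    simp only [hs, Multiset.insert_eq_cons, Multiset.mem_cons, Multiset.mem_singleton] at hx
    rcases hx with rfl | rfl | rfl | rfl | rfl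
    exacts [hroot _ hfx1, hroot _ hfx2, hroot _ hfx3, hroot _ hfx4, hroot _ hfx5])
  have hcard : quinticP.roots.card ≤ 5 := by
    simpa [hdeg] using quinticP.card_roots'
  have hscard : s.card = 5 := by simp [hs]
  have hroots_eq : s = quinticP.roots :=
    Multiset.eq_of_le_of_card_le hsub (by omega)
  have hsplit : Splits quinticP :=
    splits_iff_card_roots.mpr (by rw [← hroots_eq, hscard, hdeg])
  have hfact : quinticP = (quinticP.roots.map fun a => X - C a).prod :=
    hsplit.eq_prod_roots_of_monic hmonic
  intro w hw
  have hwe : eval w (quinticP.map (algebraMap ℝ ℂ)) = 0 := by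
    rw [eval_map, ← aeval_def]
    simp only [quinticP, map_add, map_sub, map_mul, map_pow, aeval_X, aeval_C]
    push_cast
    linear_combination hw
  rw [hfact, ← hroots_eq] at hwe
  simp only [hs, Multiset.insert_eq_cons, Polynomial.map_multiset_prod, Multiset.map_cons,
    Multiset.map_singleton, Polynomial.map_mul, Polynomial.map_sub, Polynomial.map_X, Polynomial.map_C,
    Multiset.prod_cons, Multiset.prod_singleton, eval_mul, eval_sub, eval_X, eval_C] at hwe
  have := mul_eq_zero.mp hwe
  rcases this with h | this
  · exact Or.inl (by rwa [sub_eq_zero] at h)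
  rcases mul_eq_zero.mp this with h | this
  · exact Or.inr (Or.inl (by rwa [sub_eq_zero] at h))
  rcases mul_eq_zero.mp this with h | this
  · exact Or.inr (Or.inr (Or.inl (by rwa [sub_eq_zero] at h)))
  rcases mul_eq_zero.mp this with h | h
  · exact Or.inr (Or.inr (Or.inr (Or.inl (by rwa [sub_eq_zero] at h))))
  · exact Or.inr (Or.inr (Or.inr (Or.inr (by rwa [sub_eq_zero] at h))))

lemma abs_eq_one_of_quad_s11 {x : ℝ} (hx1 : -2 < x) (hx2 : x < 2) {z : ℂ}
    (hq : z^2 - (x:ℂ)*z + 1 = 0) : ‖z‖ = 1 := by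
  by_cases hzc : (starRingEnd ℂ) z = z
  · exfalso
    obtain ⟨r, hr⟩ : ∃ r : ℝ, z = (r : ℂ) := ⟨z.re, (Complex.conj_eq_iff_re.mp hzc).symm⟩
    rw [hr] at hq
    have hq' : ((r^2 - x*r + 1 : ℝ) : ℂ) = 0 := by push_cast; linear_combination hq
    have hq'' : r^2 - x*r + 1 = 0 := by exact_mod_cast hq'
    nlinarith [sq_nonneg (2*r - x), sq_nonneg x]
  · set c := (starRingEnd ℂ) z with hc
    have hqc : c^2 - (x:ℂ)*c + 1 = 0 := by
      have := congrArg (starRingEnd ℂ) hq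
      simpa [map_sub, map_add, map_mul, map_pow, Complex.conj_ofReal, hc] using this
    have hsum : z + c = (x:ℂ) := by
      have h1 : (z - c) * (z + c - x) = 0 := by linear_combination hq - hqc
      have h2 : z - c ≠ 0 := sub_ne_zero.mpr (fun h => hzc (by rw [← h]))
      have := (mul_eq_zero.mp h1).resolve_left h2
      linear_combination this
    have hprod : z * c = 1 := by
      have : z * ((x:ℂ) - z) = 1 := by linear_combination -hq
      calc z * c = z * ((x:ℂ) - z) := by rw [← hsum]; ring
      _ = 1 := this
    have habs2 : ‖z‖ ^ 2 = 1 := by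
      have hns : (Complex.normSq z : ℂ) = 1 := by rw [← Complex.mul_conj]; exact hprod
      have : Complex.normSq z = 1 := by exact_mod_cast hns
      rw [← Complex.sq_norm] at this
      exact this
    nlinarith [norm_nonneg z, habs2]

lemma lehmer_core :
    ∃ τ : ℝ, aeval τ lehmerPoly = 0 ∧ (1.17:ℝ) < τ ∧ τ < (1.18:ℝ) ∧
      ∀ z : ℂ, aeval z lehmerPoly = 0 →
        z = (τ:ℂ) ∨ z = ((τ:ℂ))⁻¹ ∨ ‖z‖ = 1 := by
  obtain ⟨x1, x2, x3, x4, x5, hx1, hx2, hx3, hx4, hx5, hclass⟩ := quintic_roots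
  -- get τ by IVT
  set g : ℝ → ℝ := fun x => x^10 + x^9 - x^7 - x^6 - x^5 - x^4 - x^3 + x + 1 with hg
  have hc : Continuous g := by fun_prop
  obtain ⟨τ, hτmem, hτ0⟩ :
      ∃ τ, τ ∈ Set.Ioo (1.17:ℝ) (1.18:ℝ) ∧ g τ = 0 := by
    have hmem : (0:ℝ) ∈ Set.Ioo (g 1.17) (g 1.18) := by
      constructor <;> norm_num [hg]
    obtain ⟨τ, h1, h2⟩ := intermediate_value_Ioo (by norm_num : (1.17:ℝ) ≤ 1.18)
      hc.continuousOn hmem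
    exact ⟨τ, h1, h2⟩
  obtain ⟨hτa, hτb⟩ := hτmem
  have hτpos : (0:ℝ) < τ := by linarith
  have hτ1 : (1:ℝ) < τ := by linarith
  have hτne : τ ≠ 0 := ne_of_gt hτpos
  have hτroot : aeval τ lehmerPoly = 0 := by rw [aeval_lehmer]; exact hτ0
  -- the master identity over ℂ
  have key : ∀ z : ℂ, z ≠ 0 → aeval z lehmerPoly = 0 →
      ∃ i ∈ ({x1, x2, x3, x4, x5} : Set ℝ), z + z⁻¹ = (i:ℂ) := by
    intro z hz h0
    rw [aeval_lehmer] at h0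
    set w : ℂ := z + z⁻¹ with hw
    have hzw : z * w = z^2 + 1 := by
      rw [hw]; field_simp
    have hident : z^5 * (w^5 + w^4 - 5*w^3 - 5*w^2 + 4*w + 3)
        = z^10 + z^9 - z^7 - z^6 - z^5 - z^4 - z^3 + z + 1 := by
      have expand : z^5 * (w^5 + w^4 - 5*w^3 - 5*w^2 + 4*w + 3)
          = (z*w)^5 + z*(z*w)^4 - 5*z^2*(z*w)^3 - 5*z^3*(z*w)^2 + 4*z^4*(z*w) + 3*z^5 := by
        ring
      rw [expand, hzw]
      ring
    have hq : w^5 + w^4 - 5*w^3 - 5*w^2 + 4*w + 3 = 0 := by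
      have h5 : z^5 ≠ 0 := pow_ne_zero _ hz
      have := hident.trans h0
      exact (mul_eq_zero.mp this).resolve_left h5
    rcases hclass w hq with h | h | h | h | h
    · exact ⟨x1, by simp, h⟩
    · exact ⟨x2, by simp, h⟩
    · exact ⟨x3, by simp, h⟩
    · exact ⟨x4, by simp, h⟩
    · exact ⟨x5, by simp, h⟩
  -- τ + τ⁻¹ = x5
  have hτc : ((τ:ℂ)) ≠ 0 := by exact_mod_cast hτne
  have hτsum : τ + τ⁻¹ = x5 := by
    have hgr : τ^10 + τ^9 - τ^7 - τ^6 - τ^5 - τ^4 - τ^3 + τ + 1 = 0 := hτ0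
    have hroot' : aeval ((τ:ℝ):ℂ) lehmerPoly = 0 := by
      rw [aeval_lehmer]
      exact_mod_cast congrArg (fun r : ℝ => (r : ℂ)) hgr
    obtain ⟨i, hi, hsum⟩ := key (τ:ℂ) hτc hroot'
    have hsum' : ((τ + τ⁻¹ : ℝ) : ℂ) = (i:ℂ) := by push_cast; rw [← hsum]
    have hsumr : τ + τ⁻¹ = i := by exact_mod_cast hsum'
    have hgt2 : 2 < τ + τ⁻¹ := by
      have h : τ*(τ + τ⁻¹ - 2) = (τ-1)^2 := by field_simp; ring
      have h0 : (0:ℝ) < τ - 1 := by linarith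
      have h2 : (0:ℝ) < (τ-1)^2 := by positivity
      nlinarith
    simp only [Set.mem_insert_iff, Set.mem_singleton_iff] at hi
    rcases hi with h | h | h | h | h <;> rw [h] at hsumr
    · linarith [hx1.2]
    · linarith [hx2.2]
    · linarith [hx3.2]
    · linarith [hx4.2]
    · exact hsumr
  refine ⟨τ, hτroot, hτa, hτb, ?_⟩
  intro z hzL
  have hz0 : z ≠ 0 := by
    intro h
    rw [h, aeval_lehmer] at hzL
    norm_num at hzL
  obtain ⟨i, hi, hsum⟩ := key z hz0 hzL
  have hquad : z^2 - (i:ℂ)*z + 1 = 0 := by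
    have : z * (z + z⁻¹) = z^2 + 1 := by
      field_simp
    calc z^2 - (i:ℂ)*z + 1 = z^2 + 1 - (i:ℂ)*z := by ring
    _ = z * (z + z⁻¹) - (i:ℂ)*z := by rw [this]
    _ = z * (i:ℂ) - (i:ℂ)*z := by rw [hsum]
    _ = 0 := by ring
  simp only [Set.mem_insert_iff, Set.mem_singleton_iff] at hi
  rcases hi with h | h | h | h | h <;> rw [h] at hquad
  · exact Or.inr (Or.inr (abs_eq_one_of_quad_s11 hx1.1 (by linarith [hx1.2]) hquad))
  · exact Or.inr (Or.inr (abs_eq_one_of_quad_s11 (by linarith [hx2.1]) (by linarith [hx2.2]) hquad))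
  · exact Or.inr (Or.inr (abs_eq_one_of_quad_s11 (by linarith [hx3.1]) (by linarith [hx3.2]) hquad))
  · exact Or.inr (Or.inr (abs_eq_one_of_quad_s11 (by linarith [hx4.1]) (by linarith [hx4.2]) hquad))
  · -- i = x5 : z = τ or τ⁻¹
    have hfac : (z - (τ:ℂ)) * (z - ((τ:ℂ))⁻¹) = 0 := by
      have hx5c : ((x5:ℝ):ℂ) = (τ:ℂ) + ((τ:ℂ))⁻¹ := by
        rw [← hτsum]; push_cast; ring
      have hinv : (τ:ℂ) * ((τ:ℂ))⁻¹ = 1 := mul_inv_cancel₀ hτc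
      calc (z - (τ:ℂ)) * (z - ((τ:ℂ))⁻¹)
          = z^2 - ((τ:ℂ) + ((τ:ℂ))⁻¹)*z + (τ:ℂ) * ((τ:ℂ))⁻¹ := by ring
      _ = z^2 - ((x5:ℝ):ℂ)*z + 1 := by rw [hx5c, hinv]
      _ = 0 := hquad
    rcases mul_eq_zero.mp hfac with h | h
    · exact Or.inl (sub_eq_zero.mp h)
    · exact Or.inr (Or.inl (sub_eq_zero.mp h))

lemma aeval_coe (p : Polynomial ℚ) (x : ℝ) :
    aeval ((x : ℂ)) p = ((aeval x p : ℝ) : ℂ) := by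
  have := Polynomial.aeval_algebraMap_apply ℂ x p
  simpa using this

theorem main_step (τ : ℝ) (hτa : (1.17:ℝ) < τ) (hτb : τ < (1.18:ℝ))
    (hτroot : aeval τ lehmerPoly = 0)
    (hclass : ∀ z : ℂ, aeval z lehmerPoly = 0 →
      z = (τ:ℂ) ∨ z = ((τ:ℂ))⁻¹ ∨ ‖z‖ = 1) :
    minpoly ℚ τ = lehmerPoly ∧ aeval (τ⁻¹:ℝ) (minpoly ℚ τ) = 0 ∧ IsIntegral ℤ τ := by
  have hτ1 : (1:ℝ) < τ := by linarith
  have hτpos : (0:ℝ) < τ := by linarith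
  have hτne : τ ≠ 0 := ne_of_gt hτpos
  have hτc : ((τ:ℂ)) ≠ 0 := by exact_mod_cast hτne
  have hτform : τ^10 + τ^9 - τ^7 - τ^6 - τ^5 - τ^4 - τ^3 + τ + 1 = 0 := by
    rw [aeval_lehmer] at hτroot; exact hτroot
  have hintZ : IsIntegral ℤ τ := by
    refine ⟨lehmerZ, lehmerZ_monic, ?_⟩
    rw [← aeval_def]
    simp only [lehmerZ, map_add, map_sub, map_pow, aeval_X, map_one]
    linear_combination hτform
  have hintQ : IsIntegral ℚ τ := ⟨lehmerPoly, lehmer_monic, by rw [← aeval_def]; exact hτroot⟩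
  set m := minpoly ℚ τ with hm
  have hm_monic : m.Monic := minpoly.monic hintQ
  have hm_dvd : m ∣ lehmerPoly := minpoly.dvd ℚ τ hτroot
  have hm_irr : Irreducible m := minpoly.irreducible hintQ
  have hLroot_of_m : ∀ z : ℂ, aeval z m = 0 → aeval z lehmerPoly = 0 := by
    intro z hz
    obtain ⟨c, hc⟩ := hm_dvd
    rw [hc, map_mul, hz, zero_mul]
  have hτinv_coe : (((τ⁻¹ : ℝ)) : ℂ) = ((τ:ℂ))⁻¹ := by push_cast; ring
  -- z is an algebraic integer whenever it is a root of lehmerPoly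
  have hzint : ∀ z : ℂ, aeval z lehmerPoly = 0 → IsIntegral ℤ z := by
    intro z hz
    rw [aeval_lehmer] at hz
    refine ⟨lehmerZ, lehmerZ_monic, ?_⟩
    rw [← aeval_def]
    simp only [lehmerZ, map_add, map_sub, map_pow, aeval_X, map_one]
    linear_combination hz
  -- STEP 1 : τ⁻¹ is a root of m
  have step1 : aeval (τ⁻¹:ℝ) m = 0 := by
    by_contra hnot
    set mC := m.map (algebraMap ℚ ℂ) with hmC
    have hmC_monic : mC.Monic := hm_monic.map _
    have hroots_class : ∀ r : ℂ, r ∈ mC.roots → r = (τ:ℂ) ∨ ‖r‖ = 1 := by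
      intro r hr
      have hr0 : aeval r m = 0 := by
        have := (mem_roots hmC_monic.ne_zero).mp hr
        rwa [IsRoot, hmC, eval_map, ← aeval_def] at this
      rcases hclass r (hLroot_of_m r hr0) with h | h | h
      · exact Or.inl h
      · exfalso
        apply hnot
        rw [h, ← hτinv_coe, aeval_coe] at hr0
        exact_mod_cast hr0
      · exact Or.inr h
    have hτ_mem : ((τ:ℂ)) ∈ mC.roots := by
      rw [mem_roots hmC_monic.ne_zero, IsRoot, hmC, eval_map, ← aeval_def, aeval_coe]
      rw [minpoly.aeval]
      norm_num
    have hnodup : mC.roots.Nodup := nodup_roots (hm_irr.separable.map)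
    have hsplits : mC = (mC.roots.map fun a => X - C a).prod :=
      (IsAlgClosed.splits mC).eq_prod_roots_of_monic
        hmC_monic
    have h1 : mC.eval 0 = (mC.roots.map fun a => -a).prod := by
      conv_lhs => rw [hsplits]
      rw [eval_multiset_prod, Multiset.map_map]
      congr 1
      apply Multiset.map_congr rfl
      intro a _
      simp
    have h2 : ‖mC.eval 0‖ = ((mC.roots.map fun a => -a).map (‖·‖)).prod := by
      rw [h1]
      exact map_multiset_prod (normHom : ℂ →*₀ ℝ) _
    have h3 : ‖mC.eval 0‖ = (mC.roots.map fun a => ‖a‖).prod := by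
      rw [h2, Multiset.map_map]
      congr 1
      apply Multiset.map_congr rfl
      intro a _
      simp [map_neg_eq_map]
    have hcons : mC.roots = (τ:ℂ) ::ₘ mC.roots.erase (τ:ℂ) := (Multiset.cons_erase hτ_mem).symm
    have h4 : (mC.roots.map fun a => ‖a‖).prod = τ := by
      rw [hcons, Multiset.map_cons, Multiset.prod_cons]
      have hrest : ((mC.roots.erase ((τ:ℂ))).map fun a => ‖a‖).prod = 1 := by
        apply Multiset.prod_eq_one
        intro x hx
        obtain ⟨a, ha, rfl⟩ := Multiset.mem_map.mp hx
        have hane : a ≠ (τ:ℂ) := ((Multiset.Nodup.mem_erase_iff hnodup).mp ha).1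
        have hamem : a ∈ mC.roots := ((Multiset.Nodup.mem_erase_iff hnodup).mp ha).2
        rcases hroots_class a hamem with h | h
        · exact absurd h hane
        · exact h
      rw [hrest, mul_one, Complex.norm_real, Real.norm_eq_abs, abs_of_pos hτpos]
    -- now the constant coefficient is an integer
    have hmZ := minpoly.isIntegrallyClosed_eq_field_fractions' ℚ hintZ
    set n : ℤ := (minpoly ℤ τ).coeff 0 with hn
    have hcoeff : m.coeff 0 = (n : ℚ) := by
      rw [hm, hmZ, coeff_map]
      simp [hn]
    have heval0 : mC.eval 0 = ((n:ℚ) : ℂ) := by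
      rw [← coeff_zero_eq_eval_zero, hmC, coeff_map, hcoeff]
      simp
    have habs : |(n:ℝ)| = τ := by
      have := h3.trans h4
      rw [heval0] at this
      rw [← this]
      rw [show (((n:ℚ)):ℂ) = ((n:ℝ):ℂ) by push_cast; ring, Complex.norm_real, Real.norm_eq_abs]
    have h1n : (1:ℝ) < |(n:ℝ)| := by rw [habs]; linarith
    have h2n : |(n:ℝ)| < 2 := by rw [habs]; linarith
    rw [← Int.cast_abs] at h1n h2n
    have h1n' : (1:ℤ) < |n| := by exact_mod_cast h1n
    have h2n' : |n| < 2 := by exact_mod_cast h2n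
    omega
  -- STEP 2 : every monic irreducible factor of lehmerPoly is m
  have hminv : minpoly ℚ (τ⁻¹:ℝ) = m :=
    (minpoly.eq_of_irreducible_of_monic hm_irr step1 hm_monic).symm
  have hfactor : ∀ p : Polynomial ℚ, p.Monic → Irreducible p → p ∣ lehmerPoly → p = m := by
    intro p hpm hpi hpd
    by_cases hcase : p = m
    · exact hcase
    exfalso
    have hLroot_of_p : ∀ z : ℂ, aeval z p = 0 → aeval z lehmerPoly = 0 := by
      intro z hz
      obtain ⟨c, hc⟩ := hpd
      rw [hc, map_mul, hz, zero_mul]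
    have hnoτ : ∀ w : ℂ, aeval w p = 0 → ‖w‖ = 1 := by
      intro w hw
      rcases hclass w (hLroot_of_p w hw) with h | h | h
      · exfalso; apply hcase
        rw [h, aeval_coe] at hw
        have hw' : aeval τ p = 0 := by exact_mod_cast hw
        exact minpoly.eq_of_irreducible_of_monic hpi hw' hpm
      · exfalso; apply hcase
        rw [h, ← hτinv_coe, aeval_coe] at hw
        have hw' : aeval (τ⁻¹:ℝ) p = 0 := by exact_mod_cast hw
        exact (minpoly.eq_of_irreducible_of_monic hpi hw' hpm).trans hminv
      · exact h
    -- get a complex root of p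
    have hdegpos : 0 < p.natDegree := hpi.natDegree_pos
    have hdegC : 0 < (p.map (algebraMap ℚ ℂ)).degree := by
      rw [degree_map]
      exact natDegree_pos_iff_degree_pos.mp hdegpos
    obtain ⟨z, hzroot⟩ := Complex.exists_root hdegC
    have hz : aeval z p = 0 := by
      rwa [IsRoot, eval_map, ← aeval_def] at hzroot
    have hpz : minpoly ℚ z = p :=
      (minpoly.eq_of_irreducible_of_monic hpi hz hpm).symm
    obtain ⟨k, hk, hzk⟩ := pow_eq_one_of_conj_abs_one
      (hzint z (hLroot_of_p z hz)) (by rw [hpz]; exact hnoτ)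
    exact not_root_of_unity hk hzk (by rw [hpz]; exact hpd)
  -- factorization induction
  have hmdeg : 0 < m.natDegree := minpoly.natDegree_pos hintQ
  have hpow : ∀ N : ℕ, ∀ g : Polynomial ℚ, g.natDegree ≤ N → g.Monic →
      g ∣ lehmerPoly → ∃ k : ℕ, g = m ^ k := by
    intro N
    induction N with
    | zero =>
      intro g hdeg hgm _
      exact ⟨0, by rw [pow_zero, ← hgm.natDegree_eq_zero]; omega⟩
    | succ N ih =>
      intro g hdeg hgm hgdvd
      by_cases hg1 : g = 1
      · exact ⟨0, by rw [pow_zero, hg1]⟩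
      have hgu : ¬IsUnit g := by rw [hgm.isUnit_iff]; exact hg1
      obtain ⟨p, hpm, hpi, hpdvd⟩ := g.exists_monic_irreducible_factor hgu
      have hpm' : p = m := hfactor p hpm hpi (hpdvd.trans hgdvd)
      rw [hpm'] at hpdvd
      obtain ⟨g', rfl⟩ := hpdvd
      have hg'm : g'.Monic := hm_monic.of_mul_monic_left hgm
      have hg'dvd : g' ∣ lehmerPoly := (Dvd.intro_left m rfl).trans hgdvd
      have hdeg' : g'.natDegree ≤ N := by
        have := hm_monic.natDegree_mul hg'm
        omega
      obtain ⟨k, hk⟩ := ih g' hdeg' hg'm hg'dvd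
      exact ⟨k + 1, by rw [hk, pow_succ, mul_comm]⟩
  obtain ⟨k, hLk⟩ := hpow 10 lehmerPoly (le_of_eq lehmer_natDegree) lehmer_monic dvd_rfl
  have hkdeg : 10 = k * m.natDegree := by
    have := congrArg natDegree hLk
    rwa [lehmer_natDegree, natDegree_pow] at this
  have hk0 : k ≠ 0 := by rintro rfl; simp at hkdeg
  have hk1 : k = 1 := by
    by_contra hk1
    have hk2 : 2 ≤ k := by omega
    -- τ is a double root : the derivative of lehmerPoly vanishes at τ
    have hder : aeval τ (derivative lehmerPoly) = 0 := by
      rw [hLk, derivative_pow]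
      have hma : aeval τ m = 0 := minpoly.aeval ℚ τ
      simp only [map_mul, map_pow, map_natCast]
      rw [hma, zero_pow (by omega : k - 1 ≠ 0)]
      ring
    have hderval : aeval τ (derivative lehmerPoly) =
        10*τ^9 + 9*τ^8 - 7*τ^6 - 6*τ^5 - 5*τ^4 - 4*τ^3 - 3*τ^2 + 1 := by
      simp only [lehmerPoly, derivative_add, derivative_sub, derivative_X_pow, derivative_X,
        derivative_one, map_add, map_sub, map_mul, map_pow, aeval_X, map_natCast, map_one, map_zero]
      push_cast
      ring
    rw [hderval] at hder
    have e9 : (1.17:ℝ)^9 ≤ τ^9 := pow_le_pow_left₀ (by norm_num) hτa.le 9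
    have e8 : (1.17:ℝ)^8 ≤ τ^8 := pow_le_pow_left₀ (by norm_num) hτa.le 8
    have f6 : τ^6 ≤ (1.18:ℝ)^6 := pow_le_pow_left₀ (by linarith) hτb.le 6
    have f5 : τ^5 ≤ (1.18:ℝ)^5 := pow_le_pow_left₀ (by linarith) hτb.le 5
    have f4 : τ^4 ≤ (1.18:ℝ)^4 := pow_le_pow_left₀ (by linarith) hτb.le 4
    have f3 : τ^3 ≤ (1.18:ℝ)^3 := pow_le_pow_left₀ (by linarith) hτb.le 3
    have f2 : τ^2 ≤ (1.18:ℝ)^2 := pow_le_pow_left₀ (by linarith) hτb.le 2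
    have hnum : (0:ℝ) < 10*(1.17:ℝ)^9 + 9*(1.17:ℝ)^8 - 7*(1.18:ℝ)^6 - 6*(1.18:ℝ)^5
        - 5*(1.18:ℝ)^4 - 4*(1.18:ℝ)^3 - 3*(1.18:ℝ)^2 + 1 := by norm_num
    linarith
  rw [hk1, pow_one] at hLk
  exact ⟨hLk.symm, step1, hintZ⟩

end LehmerAux

theorem lehmer_smallest_known_salem :
    Irreducible lehmerPoly ∧
      ∃ τ : ℝ, Polynomial.aeval τ lehmerPoly = 0 ∧ 1 < τ ∧
        (∀ σ : ℝ, Polynomial.aeval σ lehmerPoly = 0 → 1 < σ → σ = τ) ∧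
        (1.17 : ℝ) < τ ∧ τ < (1.18 : ℝ) ∧ IsSalem τ ∧
        (minpoly ℚ τ).natDegree = 10 := by
  obtain ⟨τ, hτroot, hτa, hτb, hclass⟩ := lehmer_core
  obtain ⟨hmL, hinv, hintZ⟩ := main_step τ hτa hτb hτroot hclass
  have hτ1 : (1:ℝ) < τ := by linarith
  have hτpos : (0:ℝ) < τ := by linarith
  have hintQ : IsIntegral ℚ τ := hintZ.tower_top
  have hτinv_coe : (((τ⁻¹ : ℝ)) : ℂ) = ((τ:ℂ))⁻¹ := by push_cast; ring
  constructor
  · rw [← hmL]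
    exact minpoly.irreducible hintQ
  refine ⟨τ, hτroot, hτ1, ?_, hτa, hτb, ?_, by rw [hmL, lehmer_natDegree]⟩
  · -- uniqueness of the real root > 1
    intro σ hσ hσ1
    have hσc : Polynomial.aeval ((σ:ℝ):ℂ) lehmerPoly = 0 := by
      rw [aeval_coe, hσ]
      norm_num
    rcases hclass _ hσc with h | h | h
    · exact_mod_cast h
    · exfalso
      rw [← hτinv_coe] at h
      have hστ : σ = τ⁻¹ := by exact_mod_cast h
      have : τ⁻¹ < 1 := by
        rw [inv_lt_one_iff₀]
        right; exact hτ1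
      linarith
    · exfalso
      rw [Complex.norm_real, Real.norm_eq_abs, abs_of_pos (by linarith : (0:ℝ) < σ)] at h
      linarith
  · -- Salem
    refine ⟨hτ1, hintZ, by rw [hmL, lehmer_natDegree]; norm_num, ?_, ?_⟩
    · show Polynomial.aeval ((τ:ℂ))⁻¹ (minpoly ℚ τ) = 0
      rw [← hτinv_coe, aeval_coe, hinv]
      norm_num
    · intro z hz hz1 hz2
      have hz' : Polynomial.aeval z lehmerPoly = 0 := by
        have : Polynomial.aeval z (minpoly ℚ τ) = 0 := hz
        rwa [hmL] at this
      rcases hclass z hz' with h | h | h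
      · exact absurd h hz1
      · exact absurd h hz2
      · exact h
end

section
/- If m ≥ 2 and τ₁, τ₂, …, τ_m are Salem numbers, then the sum τ₁ + τ₂ + ⋯ + τ_m is not a Salem number. -/
open Polynomial IntermediateField Finset

lemma salem_cases {τ : ℝ} (h : IsSalem τ) {z : ℂ} (hz : IsConjugateOf z τ) :
    z = (τ : ℂ) ∨ z = ((τ : ℂ))⁻¹ ∨ ‖z‖ = 1 := by
  by_cases h1 : z = (τ : ℂ)
  · exact Or.inl h1
  by_cases h2 : z = ((τ : ℂ))⁻¹
  · exact Or.inr (Or.inl h2)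
  exact Or.inr (Or.inr (h.2.2.2.2 z hz h1 h2))

lemma salem_abs_le {τ : ℝ} (h : IsSalem τ) {z : ℂ} (hz : IsConjugateOf z τ) :
    ‖z‖ ≤ τ := by
  have h1 : (1 : ℝ) < τ := h.1
  rcases salem_cases h hz with h' | h' | h'
  · rw [h', Complex.norm_real, Real.norm_eq_abs, abs_of_pos (by linarith)]
  · rw [h', norm_inv, Complex.norm_real, Real.norm_eq_abs, abs_of_pos (by linarith)]
    have : τ⁻¹ ≤ 1 := by
      rw [inv_le_one_iff₀]; right; linarith
    linarith
  · linarith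

set_option maxHeartbeats 1000000 in
theorem sum_of_salem_not_salem (m : ℕ) (hm : 2 ≤ m) (τ : Fin m → ℝ)
    (hτ : ∀ i, IsSalem (τ i)) :
    ¬ IsSalem (∑ i, τ i) := by
  intro hS
  set S : ℝ := ∑ i, τ i with hSdef
  have ht1 : ∀ i, 1 < τ i := fun i => (hτ i).1
  have hS1 : 1 < S := hS.1
  -- integrality over ℚ
  have hint : ∀ i, IsIntegral ℚ (τ i) := fun i => (hτ i).2.1.tower_top
  -- splitting field setup
  set P : ℚ[X] := ∏ i, minpoly ℚ (τ i) with hPdef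
  have hP0 : P ≠ 0 := Finset.prod_ne_zero_iff.mpr fun i _ => minpoly.ne_zero (hint i)
  set L : IntermediateField ℚ ℂ := IntermediateField.adjoin ℚ (P.rootSet ℂ) with hLdef
  have hsplit : (P.map (algebraMap ℚ ℂ)).Splits := IsAlgClosed.splits _
  haveI hSF : IsSplittingField ℚ L P := adjoin_rootSet_isSplittingField hsplit
  haveI hNor : Normal ℚ L := Normal.of_isSplittingField P
  -- membership of the τ i
  have htL : ∀ i, ((τ i : ℂ)) ∈ L := by
    intro i
    apply IntermediateField.subset_adjoin
    rw [Polynomial.mem_rootSet]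
    refine ⟨hP0, ?_⟩
    rw [hPdef, map_prod]
    apply Finset.prod_eq_zero (Finset.mem_univ i)
    have : ((τ i : ℂ)) = algebraMap ℝ ℂ (τ i) := rfl
    rw [this, Polynomial.aeval_algebraMap_apply, minpoly.aeval, map_zero]
  set t : Fin m → L := fun i => ⟨(τ i : ℂ), htL i⟩ with htdef
  set Sh : L := ∑ i, t i with hShdef
  have hShC : (algebraMap L ℂ) Sh = (S : ℂ) := by
    rw [hShdef, map_sum, hSdef]
    push_cast
    exact Finset.sum_congr rfl fun i _ => rfl
  -- minpoly transfer lemma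
  have hminL : ∀ (α : ℝ) (h : (α : ℂ) ∈ L), minpoly ℚ (⟨(α : ℂ), h⟩ : L) = minpoly ℚ α := by
    intro α h
    have e1 : minpoly ℚ (algebraMap L ℂ (⟨(α : ℂ), h⟩ : L)) = minpoly ℚ (⟨(α : ℂ), h⟩ : L) :=
      minpoly.algebraMap_eq (algebraMap L ℂ).injective _
    have e2 : minpoly ℚ (algebraMap ℝ ℂ α) = minpoly ℚ α :=
      minpoly.algebraMap_eq (algebraMap ℝ ℂ).injective _
    have e3 : algebraMap L ℂ (⟨(α : ℂ), h⟩ : L) = algebraMap ℝ ℂ α := rfl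
    rw [← e1, e3, e2]
  -- conjugates via automorphisms
  have hconj : ∀ (e : L ≃ₐ[ℚ] L) (i : Fin m),
      IsConjugateOf ((algebraMap L ℂ) (e (t i))) (τ i) := by
    intro e i
    have h0 : Polynomial.aeval (e (t i)) (minpoly ℚ (t i)) = 0 := by
      have := minpoly.aeval ℚ (e (t i))
      rwa [minpoly.algEquiv_eq] at this
    unfold IsConjugateOf
    rw [← hminL (τ i) (htL i), Polynomial.aeval_algebraMap_apply, h0, map_zero]
  -- the fixing lemma: if e fixes Sh, it fixes every t i
  have hfix : ∀ e : L ≃ₐ[ℚ] L, e Sh = Sh → ∀ i, e (t i) = t i := by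
    intro e he i
    set z : Fin m → ℂ := fun j => (algebraMap L ℂ) (e (t j)) with hzdef
    have habs : ∀ j, ‖z j‖ ≤ τ j := fun j => salem_abs_le (hτ j) (hconj e j)
    have hsum : ∑ j, z j = (S : ℂ) := by
      rw [hzdef]
      rw [← map_sum, ← map_sum, ← hShdef, he, hShC]
    have hre : ∑ j, (z j).re = S := by
      have := congrArg Complex.re hsum
      rwa [Complex.re_sum, Complex.ofReal_re] at this
    have hle : ∀ j, (z j).re ≤ τ j := fun j => (Complex.re_le_norm _).trans (habs j)
    have heq : ∀ j, (z j).re = τ j := by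
      by_contra hc
      push_neg at hc
      obtain ⟨j, hj⟩ := hc
      have : ∑ j, (z j).re < ∑ j, τ j :=
        Finset.sum_lt_sum (fun k _ => hle k) ⟨j, Finset.mem_univ j, lt_of_le_of_ne (hle j) hj⟩
      rw [hre, ← hSdef] at this
      exact lt_irrefl _ this
    have habse : ‖z i‖ = τ i :=
      le_antisymm (habs i) ((heq i) ▸ Complex.re_le_norm (z i))
    have him : (z i).im = 0 := by
      have h1 : ‖z i‖ ^ 2 = (z i).re ^ 2 + (z i).im ^ 2 := by
        rw [Complex.sq_norm, Complex.normSq_apply]; ring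
      rw [habse, heq i] at h1
      nlinarith [sq_nonneg (z i).im]
    have hz2 : z i = ((τ i : ℂ)) := by
      apply Complex.ext
      · rw [heq i, Complex.ofReal_re]
      · rw [him, Complex.ofReal_im]
    apply (algebraMap L ℂ).injective
    exact hz2
  -- get the automorphism g sending Sh to Sh⁻¹
  have hShinvC : (algebraMap L ℂ) Sh⁻¹ = ((S⁻¹ : ℝ) : ℂ) := by
    rw [map_inv₀, hShC, Complex.ofReal_inv]
  have hShne : minpoly ℚ (Sh⁻¹) = minpoly ℚ Sh := by
    have hintS : IsIntegral ℚ Sh := hNor.isIntegral Sh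
    refine (minpoly.eq_of_irreducible_of_monic (minpoly.irreducible hintS) ?_ ?_).symm
    · -- aeval Sh⁻¹ (minpoly ℚ Sh) = 0
      apply (algebraMap L ℂ).injective
      rw [map_zero, ← Polynomial.aeval_algebraMap_apply, hShinvC]
      have hmm : minpoly ℚ Sh = minpoly ℚ S := by
        have e1 : minpoly ℚ (algebraMap L ℂ Sh) = minpoly ℚ Sh :=
          minpoly.algebraMap_eq (algebraMap L ℂ).injective _
        have e2 : minpoly ℚ (algebraMap ℝ ℂ S) = minpoly ℚ S :=
          minpoly.algebraMap_eq (algebraMap ℝ ℂ).injective _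
        rw [← e1, hShC]
        exact e2
      rw [hmm]
      have := hS.2.2.2.1
      unfold IsConjugateOf at this
      rw [Complex.ofReal_inv]
      exact this
    · exact minpoly.monic (hNor.isIntegral Sh)
  obtain ⟨g, hg⟩ : ∃ g : L ≃ₐ[ℚ] L, g Sh = Sh⁻¹ := by
    have h := (Normal.minpoly_eq_iff_mem_orbit (F := ℚ) (E := L)).mp hShne
    obtain ⟨g, hg⟩ := h
    exact ⟨g, hg⟩
  -- complex conjugation as automorphism of L
  obtain ⟨cA, hcA⟩ : ∃ cA : L ≃ₐ[ℚ] L,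
      ∀ x : L, (algebraMap L ℂ) (cA x) = (starRingEnd ℂ) ((algebraMap L ℂ) x) :=
    ⟨AlgHom.restrictNormal' (RingHom.toRatAlgHom (starRingEnd ℂ)) L,
      fun x => AlgHom.restrictNormal_commutes (RingHom.toRatAlgHom (starRingEnd ℂ)) L x⟩
  have hcAt : ∀ i, cA (t i) = t i := by
    intro i
    apply (algebraMap L ℂ).injective
    rw [hcA]
    show _ = ((τ i : ℂ))
    have : (algebraMap L ℂ) (t i) = ((τ i : ℂ)) := rfl
    rw [this, Complex.conj_ofReal]
  have hcASh : cA Sh = Sh := by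
    apply (algebraMap L ℂ).injective
    rw [hcA, hShC, Complex.conj_ofReal]
  have hcAShinv : cA Sh⁻¹ = Sh⁻¹ := by
    rw [map_inv₀, hcASh]
  -- g ∘ g fixes Sh
  have hgg : ∀ i, g (g (t i)) = t i := by
    apply hfix (g.trans g)
    show g (g Sh) = Sh
    rw [hg, map_inv₀, hg, inv_inv]
  -- (cA ∘ g) ∘ (cA ∘ g) fixes Sh
  have hww : ∀ i, cA (g (cA (g (t i)))) = t i := by
    apply hfix ((g.trans cA).trans (g.trans cA))
    show cA (g (cA (g Sh))) = Sh
    rw [hg, hcAShinv, map_inv₀, hg, inv_inv, hcASh]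
  -- deduce g (t i) is fixed by conjugation, i.e. real
  have hreal : ∀ i, cA (g (t i)) = g (t i) := by
    intro i
    have h1 : g (cA (g (t i))) = t i := by
      have := hww i
      have h2 : cA (g (cA (g (t i)))) = cA (t i) := by rw [this, hcAt]
      exact cA.injective h2
    have h3 : g (g (t i)) = t i := hgg i
    exact g.injective (h1.trans h3.symm)
  -- so g (t i) corresponds to a real conjugate
  have him0 : ∀ i, ((algebraMap L ℂ) (g (t i))).im = 0 := by
    intro i
    have := congrArg (algebraMap L ℂ) (hreal i)
    rw [hcA] at this
    exact Complex.conj_eq_iff_im.mp this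
  -- case analysis
  have hcases : ∀ i, (algebraMap L ℂ) (g (t i)) = ((τ i : ℂ)) ∨
      (algebraMap L ℂ) (g (t i)) = (((τ i)⁻¹ : ℝ) : ℂ) := by
    intro i
    rcases salem_cases (hτ i) (hconj g i) with h' | h' | h'
    · exact Or.inl h'
    · right; rw [h', Complex.ofReal_inv]
    · -- |z| = 1 and real: z = ±1, contradiction
      exfalso
      set z : ℂ := (algebraMap L ℂ) (g (t i)) with hz
      have hzre : z = ((z.re : ℝ) : ℂ) := by
        apply Complex.ext
        · rw [Complex.ofReal_re]
        · rw [Complex.ofReal_im]; exact him0 i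
      have habs1 : |z.re| = 1 := by
        have := h'
        rw [hzre] at this
        rwa [Complex.norm_real, Real.norm_eq_abs] at this
      rcases abs_eq (by norm_num : (0:ℝ) ≤ 1) |>.mp habs1 with h1 | h1
      · -- z = 1
        have hz1 : g (t i) = 1 := by
          apply (algebraMap L ℂ).injective
          rw [map_one, ← hz, hzre, h1, Complex.ofReal_one]
        have : t i = 1 := by
          have := congrArg g.symm hz1
          rwa [g.symm_apply_apply, map_one] at this
        have : ((τ i : ℂ)) = 1 := by
          have h2 := congrArg (algebraMap L ℂ) this
          rw [map_one] at h2
          exact h2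
        have : τ i = 1 := by exact_mod_cast this
        linarith [ht1 i]
      · -- z = -1
        have hz1 : g (t i) = -1 := by
          apply (algebraMap L ℂ).injective
          rw [map_neg, map_one, ← hz, hzre, h1]
          push_cast
          ring
        have : t i = -1 := by
          have := congrArg g.symm hz1
          rwa [g.symm_apply_apply, map_neg, map_one] at this
        have : ((τ i : ℂ)) = -1 := by
          have h2 := congrArg (algebraMap L ℂ) this
          rw [map_neg, map_one] at h2
          exact h2
        have : τ i = -1 := by exact_mod_cast this
        linarith [ht1 i]
  -- define real values v i
  set v : Fin m → ℝ := fun i =>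
    if (algebraMap L ℂ) (g (t i)) = ((τ i : ℂ)) then τ i else (τ i)⁻¹ with hvdef
  have hv : ∀ i, (algebraMap L ℂ) (g (t i)) = ((v i : ℝ) : ℂ) := by
    intro i
    simp only [hvdef]
    split_ifs with h'
    · exact h'
    · rcases hcases i with h'' | h''
      · exact absurd h'' h'
      · exact h''
  have hvval : ∀ i, v i = τ i ∨ v i = (τ i)⁻¹ := by
    intro i
    simp only [hvdef]
    split_ifs with h'
    · left; rfl
    · right; rfl
  have hvpos : ∀ i, 0 < v i := by
    intro i
    rcases hvval i with h' | h' <;> rw [h']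
    · linarith [ht1 i]
    · exact inv_pos.mpr (by linarith [ht1 i])
  -- sum of the v equals S⁻¹
  have hvsum : ∑ i, v i = S⁻¹ := by
    have h1 : ∑ i, ((v i : ℝ) : ℂ) = ((S⁻¹ : ℝ) : ℂ) := by
      calc ∑ i, ((v i : ℝ) : ℂ) = ∑ i, (algebraMap L ℂ) (g (t i)) := by
            exact Finset.sum_congr rfl fun i _ => (hv i).symm
        _ = (algebraMap L ℂ) (g Sh) := by rw [← map_sum, ← map_sum, ← hShdef]
        _ = ((S⁻¹ : ℝ) : ℂ) := by rw [hg, hShinvC]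
    have h2 : ((∑ i, v i : ℝ) : ℂ) = ((S⁻¹ : ℝ) : ℂ) := by
      push_cast
      push_cast at h1
      exact h1
    exact_mod_cast h2
  -- derive contradiction
  have hSinv1 : S⁻¹ < 1 := inv_lt_one_of_one_lt₀ hS1
  by_cases hA : ∃ j, v j = τ j
  · obtain ⟨j, hj⟩ := hA
    have : v j ≤ ∑ i, v i :=
      Finset.single_le_sum (fun i _ => (hvpos i).le) (Finset.mem_univ j)
    rw [hvsum, hj] at this
    linarith [ht1 j]
  · push_neg at hA
    have hall : ∀ j, v j = (τ j)⁻¹ := fun j => (hvval j).resolve_left (hA j)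
    set j0 : Fin m := ⟨0, by omega⟩ with hj0
    set j1 : Fin m := ⟨1, by omega⟩ with hj1
    have hne : j0 ≠ j1 := by
      simp [hj0, hj1, Fin.ext_iff]
    -- τ j0 < S
    have hsub : τ j0 + τ j1 ≤ S := by
      rw [hSdef]
      have := Finset.sum_le_sum_of_subset_of_nonneg
        (Finset.subset_univ {j0, j1}) (fun i _ _ => (zero_lt_one.trans (ht1 i)).le)
      rwa [Finset.sum_pair hne] at this
    have hτ0S : τ j0 < S := by linarith [ht1 j1]
    have h1 : S⁻¹ < (τ j0)⁻¹ := by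
      exact inv_strictAnti₀ (by linarith [ht1 j0]) hτ0S
    have h2 : (τ j0)⁻¹ ≤ ∑ i, v i := by
      have := Finset.single_le_sum (fun i _ => (hvpos i).le) (Finset.mem_univ j0)
      rwa [hall j0] at this
    rw [hvsum] at h2
    linarith
end
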